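/- arXiv:0811.2071 — 4 statements merged into one kernel-verified Lean document; each statement's English description precedes it below -/
import Mathlib

section
/- In the high temperature region 2α·tanh(β) < 1, the quenched Gibbs average of the squared magnetization is of order 1/N: there exists a constant C = C(α,β) such that ⟨m²⟩ = E Ω(σ_{i₀}σ_{j₀}) ≤ C/N for all system sizes N. -/
open Filter Topology Finset

noncomputable section

/-- The value of an Ising spin encoded as a Boolean: `true ↦ +1`, `false ↦ -1`. -/
def spin (b : Bool) : ℝ := if b then 1 else -1

/-- The Hamiltonian of the dilute ferromagnet on `N` sites, given the list of `k`
random edges `e`: `H = -∑_{ν} σ_{i_ν} σ_{j_ν}`. -/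
def ham (N k : ℕ) (e : Fin k → Fin N × Fin N) (σ : Fin N → Bool) : ℝ :=
  -∑ ν : Fin k, spin (σ (e ν).1) * spin (σ (e ν).2)

/-- The partition function `Z_N(β)` for a given realization of the edges. -/
def partZ (N k : ℕ) (β : ℝ) (e : Fin k → Fin N × Fin N) : ℝ :=
  ∑ σ : Fin N → Bool, Real.exp (-β * ham N k e σ)

/-- The Gibbs (Boltzmann) expectation `Ω(O)` for a given realization of the edges. -/
def gibbs (N k : ℕ) (β : ℝ) (e : Fin k → Fin N × Fin N) (O : (Fin N → Bool) → ℝ) : ℝ :=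
  (∑ σ : Fin N → Bool, Real.exp (-β * ham N k e σ) * O σ) / partZ N k β e

/-- The Poisson probability weight `P(K = k) = e^{-ζ} ζ^k / k!`. -/
def poissonWeight (ζ : ℝ) (k : ℕ) : ℝ := Real.exp (-ζ) * ζ ^ k / (Nat.factorial k)

/-- The quenched expectation `𝔼`: average over the Poisson number `K` of edges
(of mean `α N`) and over the i.i.d. uniform random endpoints of the edges, of a
disorder-dependent quantity `F`. -/
def quenchedExp (N : ℕ) (α : ℝ) (F : (k : ℕ) → (Fin k → Fin N × Fin N) → ℝ) : ℝ :=
  ∑' k : ℕ, poissonWeight (α * N) k *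
    ((∑ e : Fin k → Fin N × Fin N, F k e) / (N : ℝ) ^ (2 * k))

/-- The magnetization `m(σ) = (1/N) ∑_i σ_i`. -/
def mag (N : ℕ) (σ : Fin N → Bool) : ℝ := (∑ i : Fin N, spin (σ i)) / N

/-- The quenched Gibbs average `⟨O⟩ = 𝔼 Ω(O)`. -/
def qGibbs (N : ℕ) (α β : ℝ) (O : (Fin N → Bool) → ℝ) : ℝ :=
  quenchedExp N α (fun k e => gibbs N k β e O)

namespace HTAux

variable {N k : ℕ}

/-- degree of site `i` in the sub-multigraph indexed by `S`. -/
def deg (e : Fin k → Fin N × Fin N) (S : Finset (Fin k)) (i : Fin N) : ℕ :=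
  ∑ ν ∈ S, ((if (e ν).1 = i then 1 else 0) + (if (e ν).2 = i then 1 else 0))

lemma spin_mul_self (b : Bool) : spin b * spin b = 1 := by cases b <;> simp [spin]

lemma spin_cases (b : Bool) : spin b = 1 ∨ spin b = -1 := by cases b <;> simp [spin]

lemma exp_mul_pm (β a : ℝ) (h : a = 1 ∨ a = -1) :
    Real.exp (β * a) = Real.cosh β * (1 + Real.tanh β * a) := by
  have hc := Real.cosh_pos β
  rcases h with h | h <;> subst h <;> rw [Real.tanh_eq_sinh_div_cosh] <;> field_simp <;> ring_nf <;>
    linarith [Real.cosh_add_sinh β, Real.cosh_sub_sinh β]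

lemma boltz_expand (β : ℝ) (e : Fin k → Fin N × Fin N) (σ : Fin N → Bool) :
    Real.exp (-β * ham N k e σ) =
      Real.cosh β ^ k * ∑ S : Finset (Fin k),
        Real.tanh β ^ S.card * ∏ ν ∈ S, (spin (σ (e ν).1) * spin (σ (e ν).2)) := by
  have h1 : -β * ham N k e σ = ∑ ν : Fin k, β * (spin (σ (e ν).1) * spin (σ (e ν).2)) := by
    simp [ham, Finset.mul_sum]
  rw [h1, Real.exp_sum]
  have h2 : ∀ ν : Fin k, Real.exp (β * (spin (σ (e ν).1) * spin (σ (e ν).2)))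
      = Real.cosh β * (1 + Real.tanh β * (spin (σ (e ν).1) * spin (σ (e ν).2))) := by
    intro ν
    refine exp_mul_pm β _ ?_
    rcases spin_cases (σ (e ν).1) with h | h <;> rcases spin_cases (σ (e ν).2) with h' | h' <;>
      rw [h, h'] <;> norm_num
  rw [Finset.prod_congr rfl fun ν _ => h2 ν, Finset.prod_mul_distrib, Finset.prod_const,
    Finset.card_univ, Fintype.card_fin]
  congr 1
  have := Fintype.prod_add (fun ν : Fin k => Real.tanh β * (spin (σ (e ν).1) * spin (σ (e ν).2)))
    (fun _ => (1:ℝ))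
  rw [show (fun ν : Fin k => 1 + Real.tanh β * (spin (σ (e ν).1) * spin (σ (e ν).2)))
      = fun ν => (Real.tanh β * (spin (σ (e ν).1) * spin (σ (e ν).2))) + 1 by
      funext ν; ring] at *
  rw [this]
  refine Finset.sum_congr rfl fun S _ => ?_
  rw [Finset.prod_mul_distrib, Finset.prod_const]
  simp [mul_comm]

lemma char_sum (m : Fin N → ℕ) :
    ∑ σ : Fin N → Bool, ∏ i, spin (σ i) ^ m i
      = if (∀ i, Even (m i)) then (2:ℝ)^N else 0 := by
  classical
  rw [← Fintype.prod_sum (fun (i : Fin N) (b : Bool) => spin b ^ m i)]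
  have hb : ∀ i : Fin N, (∑ b : Bool, spin b ^ m i) = 1 + (-1:ℝ) ^ m i := by
    intro i; rw [Fintype.sum_bool]; simp [spin]
  rw [Finset.prod_congr rfl fun i _ => hb i]
  by_cases h : ∀ i, Even (m i)
  · rw [if_pos h]
    have h2 : ∀ i ∈ Finset.univ, (1 + (-1:ℝ) ^ m i) = 2 := by
      intro i _; rw [(h i).neg_one_pow]; norm_num
    rw [Finset.prod_congr rfl h2, Finset.prod_const, Finset.card_univ, Fintype.card_fin]
  · rw [if_neg h]
    push_neg at h
    obtain ⟨i, hi⟩ := h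
    refine Finset.prod_eq_zero (Finset.mem_univ i) ?_
    rw [(Nat.not_even_iff_odd.mp hi).neg_one_pow]
    ring

lemma spin_eq_prod (σ : Fin N → Bool) (j : Fin N) :
    spin (σ j) = ∏ i, spin (σ i) ^ (if j = i then 1 else 0) := by
  classical
  have : ∀ i : Fin N, spin (σ i) ^ (if j = i then 1 else 0)
      = if j = i then spin (σ i) else 1 := by
    intro i; split <;> simp
  rw [Finset.prod_congr rfl fun i _ => this i, Finset.prod_ite_eq]
  simp

lemma prod_edge_spins (e : Fin k → Fin N × Fin N) (σ : Fin N → Bool) (S : Finset (Fin k)) :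
    ∏ ν ∈ S, (spin (σ (e ν).1) * spin (σ (e ν).2)) = ∏ i, spin (σ i) ^ deg e S i := by
  classical
  have h : ∀ ν ∈ S, (spin (σ (e ν).1) * spin (σ (e ν).2))
      = ∏ i, spin (σ i) ^ ((if (e ν).1 = i then 1 else 0) + (if (e ν).2 = i then 1 else 0)) := by
    intro ν _
    rw [Finset.prod_congr rfl fun i _ => pow_add (spin (σ i)) _ _, Finset.prod_mul_distrib,
      ← spin_eq_prod, ← spin_eq_prod]
  rw [Finset.prod_congr rfl h, Finset.prod_comm]
  exact Finset.prod_congr rfl fun i _ => by rw [Finset.prod_pow_eq_pow_sum]; rfl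

/-- master expansion -/
lemma sum_exp_mul_prod (β : ℝ) (e : Fin k → Fin N × Fin N) (extra : Fin N → ℕ) :
    ∑ σ : Fin N → Bool, Real.exp (-β * ham N k e σ) * ∏ i, spin (σ i) ^ extra i
      = Real.cosh β ^ k * 2^N *
          ∑ S ∈ Finset.univ.filter (fun S : Finset (Fin k) => ∀ i, Even (deg e S i + extra i)),
            Real.tanh β ^ S.card := by
  classical
  have h1 : ∀ σ : Fin N → Bool, Real.exp (-β * ham N k e σ) * ∏ i, spin (σ i) ^ extra i
      = Real.cosh β ^ k * ∑ S : Finset (Fin k),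
          Real.tanh β ^ S.card * ∏ i, spin (σ i) ^ (deg e S i + extra i) := by
    intro σ
    rw [boltz_expand β e σ, mul_assoc, Finset.sum_mul]
    congr 1
    refine Finset.sum_congr rfl fun S _ => ?_
    rw [mul_assoc, prod_edge_spins]
    congr 1
    rw [← Finset.prod_mul_distrib]
    exact Finset.prod_congr rfl fun i _ => (pow_add _ _ _).symm
  rw [Finset.sum_congr rfl fun σ _ => h1 σ, ← Finset.mul_sum, Finset.sum_comm, mul_assoc]
  congr 1
  rw [Finset.sum_filter, Finset.mul_sum]
  refine Finset.sum_congr rfl fun S _ => ?_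
  rw [← Finset.mul_sum, char_sum]
  split <;> ring


/-- oriented edge -/
def oedge (e : Fin k → Fin N × Fin N) (ν : Fin k) (ε : Bool) : Fin N × Fin N :=
  if ε then e ν else ((e ν).2, (e ν).1)

/-- walk data of length `L`: edge indices, orientations, vertex chain. -/
abbrev WData (N k L : ℕ) : Type :=
  (Fin L → Fin k) × (Fin L → Bool) × (Fin (L+1) → Fin N)

def isWalk (e : Fin k → Fin N × Fin N) (L : ℕ) (w : WData N k L) : Prop :=
  Function.Injective w.1 ∧
    ∀ t : Fin L, oedge e (w.1 t) (w.2.1 t) = (w.2.2 t.castSucc, w.2.2 t.succ)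

instance (e : Fin k → Fin N × Fin N) (L : ℕ) (w : WData N k L) : Decidable (isWalk e L w) := by
  unfold isWalk; infer_instance

lemma deg_erase (e : Fin k → Fin N × Fin N) (S : Finset (Fin k)) {ν₀ : Fin k} (hν₀ : ν₀ ∈ S)
    {a x : Fin N} {ε₀ : Bool} (hx : oedge e ν₀ ε₀ = (a, x)) (i : Fin N) :
    deg e S i = deg e (S.erase ν₀) i + ((if a = i then 1 else 0) + (if x = i then 1 else 0)) := by
  classical
  have h1 : deg e S i = ((if (e ν₀).1 = i then 1 else 0) + (if (e ν₀).2 = i then 1 else 0))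
      + deg e (S.erase ν₀) i := by
    unfold deg
    rw [← Finset.add_sum_erase _ _ hν₀]
  cases ε₀
  · simp only [oedge, Bool.false_eq_true, if_false, Prod.ext_iff] at hx
    rw [h1, hx.1, hx.2]
    omega
  · simp only [oedge, if_true, Prod.ext_iff] at hx
    rw [h1, hx.1, hx.2]
    omega

lemma exists_walk (e : Fin k → Fin N × Fin N) (S : Finset (Fin k)) :
    ∀ a b : Fin N, a ≠ b →
    Odd (deg e S a) → Odd (deg e S b) → (∀ i, i ≠ a → i ≠ b → Even (deg e S i)) →
    ∃ (L : ℕ) (w : WData N k L),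
      1 ≤ L ∧ isWalk e L w ∧ w.2.2 0 = a ∧ w.2.2 (Fin.last L) = b ∧
      (∀ t, w.1 t ∈ S) ∧ ∀ i, Even (deg e (S \ Finset.image w.1 Finset.univ) i) := by
  classical
  induction S using Finset.strongInduction with
  | _ S ih =>
  intro a b hab ha hb hother
  have hpos : deg e S a ≠ 0 := by
    intro h; rw [h] at ha; exact (Nat.not_odd_iff_even.mpr Even.zero) ha
  have hex : ∃ ν₀ ∈ S, (e ν₀).1 = a ∨ (e ν₀).2 = a := by
    by_contra hc
    push_neg at hc
    refine hpos (Finset.sum_eq_zero fun ν hν => ?_)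
    obtain ⟨h1, h2⟩ := hc ν hν
    simp [h1, h2]
  obtain ⟨ν₀, hν₀S, hend⟩ := hex
  obtain ⟨ε₀, x, hx⟩ : ∃ (ε₀ : Bool) (x : Fin N), oedge e ν₀ ε₀ = (a, x) := by
    rcases hend with h | h
    · exact ⟨true, (e ν₀).2, by simp [oedge, Prod.ext_iff, h]⟩
    · exact ⟨false, (e ν₀).1, by simp [oedge, Prod.ext_iff, h]⟩
  have hdeg := deg_erase e S hν₀S hx
  have hpar : ∀ i, deg e (S.erase ν₀) i % 2
      = (deg e S i + (if a = i then 1 else 0) + (if x = i then 1 else 0)) % 2 := by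
    intro i; have h := hdeg i; omega
  have hsub : S.erase ν₀ ⊂ S := Finset.erase_ssubset hν₀S
  rw [Nat.odd_iff] at ha hb
  by_cases hxb : x = b
  · -- single-edge walk
    refine ⟨1, ⟨fun _ => ν₀, fun _ => ε₀, ![a, x]⟩, le_refl 1,
      ⟨fun t s _ => Subsingleton.elim t s, fun t => ?_⟩, rfl, ?_, fun _ => hν₀S, fun i => ?_⟩
    · have h0 : t = 0 := Subsingleton.elim t 0
      subst h0
      simpa using hx
    · simpa using hxb
    · have him : Finset.image (fun _ : Fin 1 => ν₀) Finset.univ = {ν₀} := by simp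
      rw [him, ← Finset.erase_eq, Nat.even_iff, hpar i]
      by_cases h1 : a = i <;> by_cases h2 : x = i
      · exact absurd ((h1.trans h2.symm).trans hxb) hab
      · rw [if_pos h1, if_neg h2, ← h1]; omega
      · rw [if_neg h1, if_pos h2, ← h2, hxb]; omega
      · rw [if_neg h1, if_neg h2]
        have := hother i (fun hc => h1 hc.symm) (fun hc => h2 (hxb.trans hc.symm))
        rw [Nat.even_iff] at this
        omega
  · -- recurse from x to b
    have hodd_x : Odd (deg e (S.erase ν₀) x) := by
      rw [Nat.odd_iff, hpar x, if_pos (rfl : x = x)]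
      by_cases hax : a = x
      · rw [if_pos hax, ← hax]; omega
      · rw [if_neg hax]
        have := hother x (fun hc => hax hc.symm) hxb
        rw [Nat.even_iff] at this
        omega
    have hodd_b : Odd (deg e (S.erase ν₀) b) := by
      rw [Nat.odd_iff, hpar b, if_neg (show ¬ a = b from hab), if_neg (show ¬ x = b from hxb)]
      omega
    have hoth : ∀ i, i ≠ x → i ≠ b → Even (deg e (S.erase ν₀) i) := by
      intro i hix hib
      rw [Nat.even_iff, hpar i, if_neg (show ¬ x = i from fun hc => hix hc.symm)]
      by_cases hia : a = i
      · rw [if_pos hia, ← hia]; omega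
      · rw [if_neg hia]
        have := hother i (fun hc => hia hc.symm) hib
        rw [Nat.even_iff] at this
        omega
    obtain ⟨L, ⟨ν, ε, v⟩, hL1, hw, hv0, hvlast, hmem, heven⟩ :=
      ih (S.erase ν₀) hsub x b hxb hodd_x hodd_b hoth
    obtain ⟨hinj, hchain⟩ := hw
    dsimp only at hinj hchain hv0 hvlast hmem heven
    refine ⟨L + 1, ⟨Fin.cases ν₀ ν, Fin.cases ε₀ ε, Fin.cases a v⟩, le_add_self, ⟨?_, ?_⟩,
      ?_, ?_, ?_, ?_⟩
    · -- injectivity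
      intro t s h
      dsimp only at h
      induction t using Fin.cases with
      | zero =>
        induction s using Fin.cases with
        | zero => rfl
        | succ s =>
          simp only [Fin.cases_zero, Fin.cases_succ] at h
          exact absurd h.symm (Finset.ne_of_mem_erase (hmem s))
      | succ t =>
        induction s using Fin.cases with
        | zero =>
          simp only [Fin.cases_zero, Fin.cases_succ] at h
          exact absurd h (Finset.ne_of_mem_erase (hmem t))
        | succ s =>
          simp only [Fin.cases_succ] at h
          rw [hinj h]
    · -- chain condition
      intro t
      dsimp only
      induction t using Fin.cases with
      | zero =>
        simp only [Fin.cases_zero, Fin.castSucc_zero]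
        rw [show ((0 : Fin (L+1)).succ) = (Fin.succ (0 : Fin (L+1)) : Fin (L+2)) from rfl]
        simp only [Fin.cases_succ]
        rw [hv0, hx]
      | succ t =>
        simp only [Fin.cases_succ, ← Fin.succ_castSucc]
        exact hchain t
    · rfl
    · dsimp only
      rw [← Fin.succ_last]
      simp only [Fin.cases_succ]
      exact hvlast
    · intro t
      dsimp only
      induction t using Fin.cases with
      | zero => simpa using hν₀S
      | succ t =>
        simp only [Fin.cases_succ]
        exact Finset.mem_of_mem_erase (hmem t)
    · intro i
      have him : Finset.image (Fin.cases ν₀ ν : Fin (L+1) → Fin k) Finset.univ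
          = insert ν₀ (Finset.image ν Finset.univ) := by
        ext j
        simp only [Finset.mem_image, Finset.mem_insert, Finset.mem_univ, true_and]
        constructor
        · rintro ⟨t, ht⟩
          induction t using Fin.cases with
          | zero => left; exact ht.symm
          | succ t => right; exact ⟨t, by simpa using ht⟩
        · rintro (h | ⟨t, ht⟩)
          · exact ⟨0, h.symm⟩
          · exact ⟨t.succ, by simpa using ht⟩
      dsimp only
      rw [him]
      have hsd : S \ insert ν₀ (Finset.image ν Finset.univ)
          = (S.erase ν₀) \ Finset.image ν Finset.univ := by
        ext j
        simp only [Finset.mem_sdiff, Finset.mem_insert, Finset.mem_erase]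
        tauto
      rw [hsd]
      exact heven i


def wFinset (N k : ℕ) : Finset ((L : ℕ) × WData N k L) :=
  (Finset.Icc 1 k).sigma (fun L => (Finset.univ : Finset (WData N k L)))

def good (e : Fin k → Fin N × Fin N) (i₀ j₀ : Fin N) (γ : (L : ℕ) × WData N k L) : Prop :=
  isWalk e γ.1 γ.2 ∧ γ.2.2.2 0 = i₀ ∧ γ.2.2.2 (Fin.last γ.1) = j₀

instance (e : Fin k → Fin N × Fin N) (i₀ j₀ : Fin N) (γ : (L : ℕ) × WData N k L) :
    Decidable (good e i₀ j₀ γ) := by unfold good; infer_instance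

def wsum (θ : ℝ) (e : Fin k → Fin N × Fin N) (i₀ j₀ : Fin N) : ℝ :=
  ∑ γ ∈ wFinset N k, if good e i₀ j₀ γ then θ ^ γ.1 else 0

def btot (θ : ℝ) (e : Fin k → Fin N × Fin N) : ℝ :=
  ∑ γ ∈ wFinset N k, if isWalk e γ.1 γ.2 then θ ^ γ.1 else 0

def evenSet (e : Fin k → Fin N × Fin N) : Finset (Finset (Fin k)) :=
  Finset.univ.filter (fun S => ∀ i, Even (deg e S i))

def esum (θ : ℝ) (e : Fin k → Fin N × Fin N) : ℝ := ∑ S ∈ evenSet e, θ ^ S.card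

def oddSet (e : Fin k → Fin N × Fin N) (i₀ j₀ : Fin N) : Finset (Finset (Fin k)) :=
  Finset.univ.filter (fun S => ∀ i,
    Even (deg e S i + ((if i₀ = i then 1 else 0) + (if j₀ = i then 1 else 0))))

def asum (θ : ℝ) (e : Fin k → Fin N × Fin N) (i₀ j₀ : Fin N) : ℝ :=
  ∑ S ∈ oddSet e i₀ j₀, θ ^ S.card

lemma asum_le {θ : ℝ} (hθ : 0 ≤ θ) (e : Fin k → Fin N × Fin N) {i₀ j₀ : Fin N}
    (hne : i₀ ≠ j₀) : asum θ e i₀ j₀ ≤ wsum θ e i₀ j₀ * esum θ e := by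
  classical
  set term : ((L : ℕ) × WData N k L) × Finset (Fin k) → ℝ :=
    fun p => θ ^ p.1.1 * θ ^ p.2.card with hterm
  set ψ : ((L : ℕ) × WData N k L) × Finset (Fin k) → Finset (Fin k) :=
    fun p => p.2 ∪ Finset.image p.1.2.1 Finset.univ with hψ
  set P : Finset (((L : ℕ) × WData N k L) × Finset (Fin k)) :=
    ((wFinset N k).filter (good e i₀ j₀)) ×ˢ evenSet e with hP
  set s : Finset (((L : ℕ) × WData N k L) × Finset (Fin k)) :=
    P.filter (fun p => ψ p ∈ oddSet e i₀ j₀) with hs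
  have htermnn : ∀ p, 0 ≤ term p := fun p => mul_nonneg (pow_nonneg hθ _) (pow_nonneg hθ _)
  have step1 : ∀ S ∈ oddSet e i₀ j₀, ∃ p, p ∈ s ∧ ψ p = S ∧ θ ^ S.card = term p := by
    intro S hS
    have hSmem := hS
    rw [oddSet, Finset.mem_filter] at hS
    have hS2 := hS.2
    have hodd_i : Odd (deg e S i₀) := by
      have h := hS2 i₀
      rw [if_pos rfl, if_neg (show ¬ j₀ = i₀ from fun hc => hne hc.symm)] at h
      rw [Nat.even_iff] at h
      rw [Nat.odd_iff]
      omega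
    have hodd_j : Odd (deg e S j₀) := by
      have h := hS2 j₀
      rw [if_neg (show ¬ i₀ = j₀ from hne), if_pos rfl] at h
      rw [Nat.even_iff] at h
      rw [Nat.odd_iff]
      omega
    have hoth : ∀ i, i ≠ i₀ → i ≠ j₀ → Even (deg e S i) := by
      intro i h1 h2
      have h := hS2 i
      rw [if_neg (show ¬ i₀ = i from fun hc => h1 hc.symm),
        if_neg (show ¬ j₀ = i from fun hc => h2 hc.symm)] at h
      simpa using h
    obtain ⟨L, w, hL1, hw, h0, hlast, hmem, heven⟩ := exists_walk e S i₀ j₀ hne hodd_i hodd_j hoth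
    have himsub : Finset.image w.1 Finset.univ ⊆ S :=
      Finset.image_subset_iff.mpr (fun t _ => hmem t)
    have hcardim : (Finset.image w.1 Finset.univ).card = L := by
      rw [Finset.card_image_of_injective _ hw.1, Finset.card_univ, Fintype.card_fin]
    have hLk : L ≤ k := by
      have := Fintype.card_le_of_injective w.1 hw.1
      simpa using this
    refine ⟨(⟨L, w⟩, S \ Finset.image w.1 Finset.univ), ?_, ?_, ?_⟩
    · rw [hs, Finset.mem_filter, hP, Finset.mem_product]
      refine ⟨⟨?_, ?_⟩, ?_⟩
      · rw [Finset.mem_filter, wFinset, Finset.mem_sigma]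
        exact ⟨⟨Finset.mem_Icc.mpr ⟨hL1, hLk⟩, Finset.mem_univ _⟩, ⟨hw, h0, hlast⟩⟩
      · rw [evenSet, Finset.mem_filter]
        exact ⟨Finset.mem_univ _, heven⟩
      · show (S \ Finset.image w.1 Finset.univ) ∪ Finset.image w.1 Finset.univ ∈ _
        rw [Finset.sdiff_union_of_subset himsub]
        exact hSmem
    · show (S \ Finset.image w.1 Finset.univ) ∪ Finset.image w.1 Finset.univ = S
      exact Finset.sdiff_union_of_subset himsub
    · show θ ^ S.card = θ ^ L * θ ^ (S \ Finset.image w.1 Finset.univ).card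
      rw [← pow_add, Finset.card_sdiff_of_subset himsub, hcardim]
      congr 1
      have : L ≤ S.card := hcardim ▸ Finset.card_le_card himsub
      omega
  calc asum θ e i₀ j₀ ≤ ∑ S ∈ oddSet e i₀ j₀, ∑ p ∈ s.filter (fun p => ψ p = S), term p := by
        refine Finset.sum_le_sum fun S hS => ?_
        obtain ⟨p, hp, hψp, hval⟩ := step1 S hS
        rw [hval]
        exact Finset.single_le_sum (fun q _ => htermnn q)
          (Finset.mem_filter.mpr ⟨hp, hψp⟩)
    _ = ∑ p ∈ s, term p :=
        Finset.sum_fiberwise_of_maps_to (fun p hp => (Finset.mem_filter.mp hp).2) term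
    _ ≤ ∑ p ∈ P, term p :=
        Finset.sum_le_sum_of_subset_of_nonneg (Finset.filter_subset _ _)
          (fun p _ _ => htermnn p)
    _ = wsum θ e i₀ j₀ * esum θ e := by
        rw [hP, Finset.sum_product, wsum, esum, Finset.sum_mul]
        rw [Finset.sum_filter]
        refine Finset.sum_congr rfl fun γ _ => ?_
        split
        · simp only [hterm, Finset.mul_sum]
        · simp

lemma partZ_pos (β : ℝ) (e : Fin k → Fin N × Fin N) : 0 < partZ N k β e :=
  Finset.sum_pos (fun σ _ => Real.exp_pos _) Finset.univ_nonempty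

lemma esum_ge_one {θ : ℝ} (hθ : 0 ≤ θ) (e : Fin k → Fin N × Fin N) : (1:ℝ) ≤ esum θ e := by
  classical
  have hmem : (∅ : Finset (Fin k)) ∈ evenSet e := by
    rw [evenSet, Finset.mem_filter]
    exact ⟨Finset.mem_univ _, fun i => by simp [deg]⟩
  have := Finset.single_le_sum (f := fun S : Finset (Fin k) => θ ^ S.card)
    (fun S _ => pow_nonneg hθ _) hmem
  simpa [esum] using this

lemma gibbs_diag (β : ℝ) (e : Fin k → Fin N × Fin N) (i₀ : Fin N) :
    gibbs N k β e (fun σ => spin (σ i₀) * spin (σ i₀)) = 1 := by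
  have hz := partZ_pos β e
  unfold gibbs
  simp only [spin_mul_self, mul_one]
  rw [show (∑ σ : Fin N → Bool, Real.exp (-β * ham N k e σ)) = partZ N k β e from rfl]
  exact div_self hz.ne'

lemma gibbs_pair_le {β : ℝ} (hβ : 0 ≤ β) (e : Fin k → Fin N × Fin N) {i₀ j₀ : Fin N}
    (hne : i₀ ≠ j₀) :
    gibbs N k β e (fun σ => spin (σ i₀) * spin (σ j₀)) ≤ wsum (Real.tanh β) e i₀ j₀ := by
  have hθ : 0 ≤ Real.tanh β := by
    rw [Real.tanh_eq_sinh_div_cosh]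
    exact div_nonneg (Real.sinh_nonneg_iff.mpr hβ) (Real.cosh_pos β).le
  have hnum : ∑ σ : Fin N → Bool, Real.exp (-β * ham N k e σ) * (spin (σ i₀) * spin (σ j₀))
      = Real.cosh β ^ k * 2^N * asum (Real.tanh β) e i₀ j₀ := by
    have hO : ∀ σ : Fin N → Bool, spin (σ i₀) * spin (σ j₀)
        = ∏ i, spin (σ i) ^ ((if i₀ = i then 1 else 0) + (if j₀ = i then 1 else 0)) := by
      intro σ
      rw [Finset.prod_congr rfl (fun i _ => pow_add (spin (σ i)) _ _), Finset.prod_mul_distrib,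
        ← spin_eq_prod, ← spin_eq_prod]
    rw [Finset.sum_congr rfl (fun σ _ => by rw [hO σ]), sum_exp_mul_prod]
    rfl
  have hZ : partZ N k β e = Real.cosh β ^ k * 2^N * esum (Real.tanh β) e := by
    have h := sum_exp_mul_prod β e (fun _ => 0)
    simp only [pow_zero, Finset.prod_const_one, mul_one, add_zero] at h
    rw [partZ, h]
    rfl
  have hpos : (0:ℝ) < Real.cosh β ^ k * 2^N :=
    mul_pos (pow_pos (Real.cosh_pos β) k) (by positivity)
  have hesum : (0:ℝ) < esum (Real.tanh β) e := lt_of_lt_of_le zero_lt_one (esum_ge_one hθ e)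
  rw [gibbs, hnum, hZ, mul_div_mul_left _ _ hpos.ne']
  rw [div_le_iff₀ hesum]
  exact asum_le hθ e hne

lemma wsum_nonneg {θ : ℝ} (hθ : 0 ≤ θ) (e : Fin k → Fin N × Fin N) (i₀ j₀ : Fin N) :
    0 ≤ wsum θ e i₀ j₀ := by
  refine Finset.sum_nonneg fun γ _ => ?_
  split
  · exact pow_nonneg hθ _
  · exact le_refl 0


lemma tanh_nn {β : ℝ} (hβ : 0 ≤ β) : 0 ≤ Real.tanh β := by
  rw [Real.tanh_eq_sinh_div_cosh]
  exact div_nonneg (Real.sinh_nonneg_iff.mpr hβ) (Real.cosh_pos β).le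

lemma sum_gibbs_pairs_le {β : ℝ} (hβ : 0 ≤ β) (e : Fin k → Fin N × Fin N) :
    ∑ i₀ : Fin N, ∑ j₀ : Fin N, gibbs N k β e (fun σ => spin (σ i₀) * spin (σ j₀))
      ≤ N + btot (Real.tanh β) e := by
  classical
  have hθ : 0 ≤ Real.tanh β := tanh_nn hβ
  have h1 : ∀ i₀ : Fin N, ∑ j₀ : Fin N, gibbs N k β e (fun σ => spin (σ i₀) * spin (σ j₀))
      ≤ 1 + ∑ j₀ : Fin N, wsum (Real.tanh β) e i₀ j₀ := by
    intro i₀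
    rw [← Finset.add_sum_erase _ _ (Finset.mem_univ i₀)]
    refine add_le_add (le_of_eq (gibbs_diag β e i₀)) ?_
    calc ∑ j₀ ∈ Finset.univ.erase i₀, gibbs N k β e (fun σ => spin (σ i₀) * spin (σ j₀))
        ≤ ∑ j₀ ∈ Finset.univ.erase i₀, wsum (Real.tanh β) e i₀ j₀ :=
          Finset.sum_le_sum fun j₀ hj =>
            gibbs_pair_le hβ e (Finset.ne_of_mem_erase hj).symm
      _ ≤ ∑ j₀ : Fin N, wsum (Real.tanh β) e i₀ j₀ :=
          Finset.sum_le_sum_of_subset_of_nonneg (Finset.subset_univ _)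
            (fun j _ _ => wsum_nonneg hθ e i₀ j)
  have hswap : ∑ i₀ : Fin N, ∑ j₀ : Fin N, wsum (Real.tanh β) e i₀ j₀
      = btot (Real.tanh β) e := by
    unfold wsum btot
    have key : ∀ γ ∈ wFinset N k, (∑ i₀ : Fin N, ∑ j₀ : Fin N,
        if good e i₀ j₀ γ then Real.tanh β ^ γ.1 else 0)
        = if isWalk e γ.1 γ.2 then Real.tanh β ^ γ.1 else 0 := by
      intro γ _
      unfold good
      by_cases hA : isWalk e γ.1 γ.2
      · simp [hA, ite_and, Finset.sum_ite_eq, Finset.sum_ite_eq']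
      · simp [hA]
    calc ∑ i₀ : Fin N, ∑ j₀ : Fin N, ∑ γ ∈ wFinset N k,
          (if good e i₀ j₀ γ then Real.tanh β ^ γ.1 else 0)
        = ∑ i₀ : Fin N, ∑ γ ∈ wFinset N k, ∑ j₀ : Fin N,
            (if good e i₀ j₀ γ then Real.tanh β ^ γ.1 else 0) :=
          Finset.sum_congr rfl fun i₀ _ => Finset.sum_comm
      _ = ∑ γ ∈ wFinset N k, ∑ i₀ : Fin N, ∑ j₀ : Fin N,
            (if good e i₀ j₀ γ then Real.tanh β ^ γ.1 else 0) := Finset.sum_comm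
      _ = ∑ γ ∈ wFinset N k, (if isWalk e γ.1 γ.2 then Real.tanh β ^ γ.1 else 0) :=
          Finset.sum_congr rfl key
  calc ∑ i₀ : Fin N, ∑ j₀ : Fin N, gibbs N k β e (fun σ => spin (σ i₀) * spin (σ j₀))
      ≤ ∑ i₀ : Fin N, (1 + ∑ j₀ : Fin N, wsum (Real.tanh β) e i₀ j₀) :=
        Finset.sum_le_sum fun i₀ _ => h1 i₀
    _ = N + btot (Real.tanh β) e := by
        rw [Finset.sum_add_distrib, Finset.sum_const, Finset.card_univ, Fintype.card_fin,
          hswap, nsmul_eq_mul, mul_one]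

/-- the oriented pair a walk datum prescribes for edge `t`. -/
def cfun {L : ℕ} (w : WData N k L) (t : Fin L) : Fin N × Fin N :=
  if w.2.1 t then (w.2.2 t.castSucc, w.2.2 t.succ) else (w.2.2 t.succ, w.2.2 t.castSucc)

lemma chain_iff {L : ℕ} (w : WData N k L) (e : Fin k → Fin N × Fin N) (t : Fin L) :
    oedge e (w.1 t) (w.2.1 t) = (w.2.2 t.castSucc, w.2.2 t.succ) ↔ e (w.1 t) = cfun w t := by
  unfold oedge cfun
  cases hε : w.2.1 t
  · simp only [Bool.false_eq_true, if_false]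
    constructor
    · intro h
      have h1 := congrArg Prod.fst h
      have h2 := congrArg Prod.snd h
      simp at h1 h2
      exact Prod.ext h2 h1
    · intro h
      rw [h]
  · simp only [if_true]

lemma card_fun_eq {L : ℕ} {ν : Fin L → Fin k} (hν : Function.Injective ν)
    (c : Fin L → Fin N × Fin N) :
    (∑ e : Fin k → Fin N × Fin N, if (∀ t, e (ν t) = c t) then (1:ℝ) else 0)
      = ((N:ℝ)^2)^(k-L) := by
  classical
  have h1 : ∀ e : Fin k → Fin N × Fin N, (if (∀ t, e (ν t) = c t) then (1:ℝ) else 0)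
      = ∏ j : Fin k, (∏ t : Fin L, if ν t = j then (if e j = c t then (1:ℝ) else 0) else 1) := by
    intro e
    rw [Finset.prod_comm]
    have h2 : ∀ t : Fin L, (∏ j : Fin k, if ν t = j then (if e j = c t then (1:ℝ) else 0) else 1)
        = (if e (ν t) = c t then (1:ℝ) else 0) := by
      intro t
      rw [Finset.prod_ite_eq]
      simp
    rw [Finset.prod_congr rfl fun t _ => h2 t, Finset.prod_boole]
    simp
  rw [Finset.sum_congr rfl fun e _ => h1 e,
    ← Fintype.prod_sum (fun (j : Fin k) (x : Fin N × Fin N) =>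
      ∏ t : Fin L, if ν t = j then (if x = c t then (1:ℝ) else 0) else 1)]
  have h3 : ∀ j : Fin k, (∑ x : Fin N × Fin N,
      ∏ t : Fin L, if ν t = j then (if x = c t then (1:ℝ) else 0) else 1)
      = if j ∈ Finset.image ν Finset.univ then 1 else (N:ℝ)^2 := by
    intro j
    by_cases hj : j ∈ Finset.image ν Finset.univ
    · rw [if_pos hj]
      obtain ⟨t₀, _, ht₀⟩ := Finset.mem_image.mp hj
      have hF : ∀ x : Fin N × Fin N,
          (∏ t : Fin L, if ν t = j then (if x = c t then (1:ℝ) else 0) else 1)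
          = if x = c t₀ then (1:ℝ) else 0 := by
        intro x
        rw [Finset.prod_eq_single t₀
          (fun t _ htne => if_neg (fun hc => htne (hν (hc.trans ht₀.symm))))
          (fun habs => absurd (Finset.mem_univ t₀) habs)]
        rw [if_pos ht₀]
      rw [Finset.sum_congr rfl fun x _ => hF x]
      simp
    · rw [if_neg hj]
      have hF : ∀ x : Fin N × Fin N,
          (∏ t : Fin L, if ν t = j then (if x = c t then (1:ℝ) else 0) else 1) = 1 := by
        intro x
        refine Finset.prod_eq_one fun t _ => ?_
        exact if_neg (fun hc => hj (Finset.mem_image.mpr ⟨t, Finset.mem_univ t, hc⟩))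
      rw [Finset.sum_congr rfl fun x _ => hF x, Finset.sum_const, Finset.card_univ,
        Fintype.card_prod, Fintype.card_fin]
      push_cast
      ring
  rw [Finset.prod_congr rfl fun j _ => h3 j,
    ← Finset.prod_filter_mul_prod_filter_not Finset.univ (fun j => j ∈ Finset.image ν Finset.univ)]
  rw [Finset.prod_congr rfl (fun j hj => if_pos (Finset.mem_filter.mp hj).2), Finset.prod_const_one,
    one_mul]
  rw [Finset.prod_congr rfl (fun j hj => if_neg (Finset.mem_filter.mp hj).2), Finset.prod_const]
  congr 1
  have hc : Finset.univ.filter (fun j => ¬ j ∈ Finset.image ν Finset.univ)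
      = (Finset.image ν Finset.univ)ᶜ := by
    ext j; simp
  rw [hc, Finset.card_compl, Finset.card_image_of_injective _ hν]
  simp

lemma sum_e_btot (θ : ℝ) :
    ∑ e : Fin k → Fin N × Fin N, btot θ e
      = ∑ L ∈ Finset.Icc 1 k,
          θ^L * (k.descFactorial L : ℝ) * 2^L * (N:ℝ)^(L+1) * ((N:ℝ)^2)^(k-L) := by
  classical
  unfold btot wFinset
  rw [Finset.sum_comm]
  rw [Finset.sum_sigma]
  refine Finset.sum_congr rfl fun L _ => ?_
  have hw : ∀ w : WData N k L, (∑ e : Fin k → Fin N × Fin N, if isWalk e L w then θ^L else 0)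
      = (if Function.Injective w.1 then (1:ℝ) else 0) * (θ^L * ((N:ℝ)^2)^(k-L)) := by
    intro w
    by_cases hinj : Function.Injective w.1
    · rw [if_pos hinj, one_mul]
      have hiw : ∀ e, (if isWalk e L w then θ^L else 0)
          = θ^L * (if (∀ t, e (w.1 t) = cfun w t) then (1:ℝ) else 0) := by
        intro e
        by_cases hch : ∀ t, e (w.1 t) = cfun w t
        · rw [if_pos ⟨hinj, fun t => (chain_iff w e t).mpr (hch t)⟩, if_pos hch, mul_one]
        · rw [if_neg (fun hc => hch (fun t => (chain_iff w e t).mp (hc.2 t))), if_neg hch,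
            mul_zero]
      rw [Finset.sum_congr rfl fun e _ => hiw e, ← Finset.mul_sum, card_fun_eq hinj (cfun w)]
    · rw [if_neg hinj, zero_mul]
      exact Finset.sum_eq_zero fun e _ => if_neg (fun hc => hinj hc.1)
  rw [Finset.sum_congr rfl fun w _ => hw w, ← Finset.sum_mul]
  have hsum : (∑ w : WData N k L, if Function.Injective w.1 then (1:ℝ) else 0)
      = (k.descFactorial L : ℝ) * 2^L * (N:ℝ)^(L+1) := by
    rw [Fintype.sum_prod_type]
    have : ∀ ν : Fin L → Fin k, (∑ p : (Fin L → Bool) × (Fin (L+1) → Fin N),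
        if Function.Injective ν then (1:ℝ) else 0)
        = (if Function.Injective ν then (1:ℝ) else 0) * (2^L * (N:ℝ)^(L+1)) := by
      intro ν
      rw [Finset.sum_const, Finset.card_univ, Fintype.card_prod, Fintype.card_fun,
        Fintype.card_fun, Fintype.card_bool, Fintype.card_fin, Fintype.card_fin,
        Fintype.card_fin]
      rw [nsmul_eq_mul]
      push_cast
      ring
    rw [Finset.sum_congr rfl fun ν _ => this ν, ← Finset.sum_mul]
    have hb : (∑ ν : Fin L → Fin k, if Function.Injective ν then (1:ℝ) else 0)
        = (k.descFactorial L : ℝ) := by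
      rw [Finset.sum_boole]
      congr 1
      rw [← Fintype.card_subtype,
        Fintype.card_congr (Equiv.subtypeInjectiveEquivEmbedding (Fin L) (Fin k)),
        Fintype.card_embedding_eq, Fintype.card_fin, Fintype.card_fin]
    rw [hb]
    ring
  rw [hsum]
  ring


lemma gibbs_mag_sq (β : ℝ) (e : Fin k → Fin N × Fin N) :
    gibbs N k β e (fun σ => (mag N σ)^2)
      = (∑ i₀ : Fin N, ∑ j₀ : Fin N,
          gibbs N k β e (fun σ => spin (σ i₀) * spin (σ j₀))) / (N:ℝ)^2 := by
  unfold gibbs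
  have h1 : ∀ σ : Fin N → Bool, Real.exp (-β * ham N k e σ) * (mag N σ)^2
      = ∑ i₀ : Fin N, ∑ j₀ : Fin N,
          Real.exp (-β * ham N k e σ) * (spin (σ i₀) * spin (σ j₀)) / (N:ℝ)^2 := by
    intro σ
    unfold mag
    rw [div_pow, sq, Finset.sum_mul_sum]
    simp only [← mul_div_assoc, Finset.mul_sum, Finset.sum_div]
  rw [Finset.sum_congr rfl fun σ _ => h1 σ]
  rw [Finset.sum_comm]
  rw [Finset.sum_congr rfl fun i₀ (_ : i₀ ∈ Finset.univ) => Finset.sum_comm]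
  simp only [Finset.sum_div]
  refine Finset.sum_congr rfl fun i₀ _ => Finset.sum_congr rfl fun j₀ _ =>
    Finset.sum_congr rfl fun σ _ => ?_
  rw [div_right_comm]

lemma gibbs_magsq_nonneg (β : ℝ) (e : Fin k → Fin N × Fin N) :
    0 ≤ gibbs N k β e (fun σ => (mag N σ)^2) := by
  unfold gibbs
  refine div_nonneg (Finset.sum_nonneg fun σ _ => ?_) (partZ_pos β e).le
  exact mul_nonneg (Real.exp_pos _).le (sq_nonneg _)

lemma poissonWeight_nonneg {ζ : ℝ} (hζ : 0 ≤ ζ) (k : ℕ) : 0 ≤ poissonWeight ζ k :=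
  div_nonneg (mul_nonneg (Real.exp_pos _).le (pow_nonneg hζ _)) (Nat.cast_nonneg _)

lemma geom_partial_le {r : ℝ} (hr0 : 0 ≤ r) (hr1 : r < 1) (n : ℕ) :
    ∑ i ∈ Finset.range n, r ^ i ≤ 1 / (1 - r) := by
  have h1r : (0:ℝ) < 1 - r := by linarith
  have hg := geom_sum_mul r n
  have h2 : (∑ i ∈ Finset.range n, r ^ i) * (1 - r) = 1 - r ^ n := by
    linear_combination -hg
  have h3 : (∑ i ∈ Finset.range n, r ^ i) = (1 - r ^ n) / (1 - r) := by
    rw [eq_div_iff h1r.ne']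
    exact h2
  rw [h3]
  have h4 : r ^ n ≥ 0 := pow_nonneg hr0 n
  have h5 : 1 - r ^ n ≤ 1 := by linarith
  exact div_le_div_of_nonneg_right h5 h1r.le

lemma poisson_partial_le {ζ : ℝ} (hζ : 0 ≤ ζ) (M : ℕ) :
    ∑ k ∈ Finset.range M, poissonWeight ζ k ≤ 1 := by
  have h1 : ∀ k, poissonWeight ζ k = Real.exp (-ζ) * (ζ^k / (Nat.factorial k : ℝ)) := by
    intro k; rw [poissonWeight, mul_div_assoc]
  rw [Finset.sum_congr rfl fun k _ => h1 k, ← Finset.mul_sum]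
  have h2 := Real.sum_le_exp_of_nonneg hζ M
  calc Real.exp (-ζ) * ∑ k ∈ Finset.range M, ζ^k / (Nat.factorial k : ℝ)
      ≤ Real.exp (-ζ) * Real.exp ζ := by
        exact mul_le_mul_of_nonneg_left h2 (Real.exp_pos _).le
    _ = 1 := by rw [← Real.exp_add]; simp

lemma poisson_desc_le {ζ : ℝ} (hζ : 0 ≤ ζ) (L M : ℕ) :
    ∑ k ∈ Finset.range M, poissonWeight ζ k * (k.descFactorial L : ℝ) ≤ ζ ^ L := by
  classical
  have h1 : ∀ k ∈ Finset.range M, poissonWeight ζ k * (k.descFactorial L : ℝ)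
      = if L ≤ k then Real.exp (-ζ) * ζ^L * (ζ^(k-L) / ((k-L).factorial : ℝ)) else 0 := by
    intro k _
    by_cases hk : L ≤ k
    · rw [if_pos hk]
      have hfac : ((k - L).factorial : ℝ) * (k.descFactorial L : ℝ) = (k.factorial : ℝ) := by
        exact_mod_cast congrArg (Nat.cast (R := ℝ)) (Nat.factorial_mul_descFactorial hk)
      have hdesc : (k.descFactorial L : ℝ) = (k.factorial : ℝ) / ((k - L).factorial : ℝ) := by
        rw [eq_div_iff (by positivity : ((k - L).factorial : ℝ) ≠ 0)]
        rw [mul_comm]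
        exact hfac
      rw [poissonWeight, hdesc]
      have hζpow : ζ ^ k = ζ ^ L * ζ ^ (k - L) := by
        rw [← pow_add]
        congr 1
        omega
      rw [hζpow]
      have hkfac : (k.factorial : ℝ) ≠ 0 := by positivity
      have hklfac : ((k - L).factorial : ℝ) ≠ 0 := by positivity
      field_simp
    · rw [if_neg hk]
      have : k.descFactorial L = 0 := Nat.descFactorial_eq_zero_iff_lt.mpr (by omega)
      rw [this]
      simp
  rw [Finset.sum_congr rfl h1]
  rw [← Finset.sum_filter]
  have h2 : ∑ k ∈ (Finset.range M).filter (fun k => L ≤ k),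
      Real.exp (-ζ) * ζ^L * (ζ^(k-L) / ((k-L).factorial : ℝ))
      = Real.exp (-ζ) * ζ^L * ∑ k ∈ (Finset.range M).filter (fun k => L ≤ k),
          (ζ^(k-L) / ((k-L).factorial : ℝ)) := by
    rw [Finset.mul_sum]
  rw [h2]
  have h3 : ∑ k ∈ (Finset.range M).filter (fun k => L ≤ k),
      (ζ^(k-L) / ((k-L).factorial : ℝ)) ≤ Real.exp ζ := by
    rw [show (∑ k ∈ (Finset.range M).filter (fun k => L ≤ k),
        (ζ^(k-L) / ((k-L).factorial : ℝ)))
        = ∑ n ∈ ((Finset.range M).filter (fun k => L ≤ k)).image (fun k => k - L),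
            (ζ^n / (n.factorial : ℝ)) from ?_]
    · calc _ ≤ ∑ n ∈ Finset.range M, (ζ^n / (n.factorial : ℝ)) := by
            refine Finset.sum_le_sum_of_subset_of_nonneg ?_ (fun n _ _ => by positivity)
            intro n hn
            obtain ⟨kk, hkk, hkkn⟩ := Finset.mem_image.mp hn
            rw [Finset.mem_filter, Finset.mem_range] at hkk
            rw [Finset.mem_range]
            omega
        _ ≤ Real.exp ζ := Real.sum_le_exp_of_nonneg hζ M
    · rw [Finset.sum_image]
      intro a ha b hb hab
      rw [Finset.mem_coe, Finset.mem_filter] at ha hb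
      simp only at hab
      omega
  calc Real.exp (-ζ) * ζ^L * ∑ k ∈ (Finset.range M).filter (fun k => L ≤ k),
        (ζ^(k-L) / ((k-L).factorial : ℝ))
      ≤ Real.exp (-ζ) * ζ^L * Real.exp ζ := by
        refine mul_le_mul_of_nonneg_left h3 ?_
        positivity
    _ = ζ ^ L := by
        rw [mul_comm (Real.exp (-ζ)) (ζ^L), mul_assoc, ← Real.exp_add]
        simp

end HTAux

/-- In the high temperature region `2 α tanh β < 1`, the quenched
Gibbs average of the squared magnetization, `⟨m²⟩ = 𝔼 Ω(σ_{i₀} σ_{j₀})` (where `i₀, j₀`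
are independent uniform sites averaged by `𝔼`), is `O(1/N)`: there is a constant
`C = C(α,β)` with `⟨m²⟩ ≤ C / N` for all system sizes `N`. -/
theorem magnetization_squared_order_one_over_N
    (α β : ℝ) (hα : 0 < α) (hβ : 0 ≤ β) (hHT : 2 * α * Real.tanh β < 1) :
    ∃ C : ℝ, ∀ N : ℕ, 1 ≤ N →
      qGibbs N α β (fun σ => (mag N σ) ^ 2)
        = quenchedExp N α (fun k e =>
            (∑ i₀ : Fin N, ∑ j₀ : Fin N,
              gibbs N k β e (fun σ => spin (σ i₀) * spin (σ j₀))) / (N : ℝ) ^ 2)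
      ∧ qGibbs N α β (fun σ => (mag N σ) ^ 2) ≤ C / N := by
  classical
  have hθ : 0 ≤ Real.tanh β := HTAux.tanh_nn hβ
  set θ := Real.tanh β with hθdef
  set r := 2 * α * θ with hrdef
  have hr0 : 0 ≤ r := by positivity
  have hr1 : r < 1 := hHT
  refine ⟨1 + 1/(1-r), fun N hN => ?_⟩
  have hN1 : (1:ℝ) ≤ (N:ℝ) := by exact_mod_cast hN
  have hN0 : (0:ℝ) < (N:ℝ) := by linarith
  have hNne : (N:ℝ) ≠ 0 := hN0.ne'
  have hζ0 : 0 ≤ α * (N:ℝ) := mul_nonneg hα.le hN0.le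
  constructor
  · unfold qGibbs quenchedExp
    refine tsum_congr fun k => ?_
    congr 2
    exact Finset.sum_congr rfl fun e _ => HTAux.gibbs_mag_sq β e
  · unfold qGibbs quenchedExp
    refine Real.tsum_le_of_sum_range_le (fun k => ?_) (fun M => ?_)
    · refine mul_nonneg (HTAux.poissonWeight_nonneg hζ0 k) (div_nonneg ?_ (by positivity))
      exact Finset.sum_nonneg fun e _ => HTAux.gibbs_magsq_nonneg β e
    · -- partial sums bound
      have hfk : ∀ k : ℕ, poissonWeight (α * N) k *
          ((∑ e : Fin k → Fin N × Fin N, gibbs N k β e (fun σ => (mag N σ)^2)) / (N:ℝ)^(2*k))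
          ≤ poissonWeight (α * N) k * (1/(N:ℝ) + (1/(N:ℝ)) *
              ∑ L ∈ Finset.Icc 1 k, (k.descFactorial L : ℝ) * (2*θ/(N:ℝ))^L) := by
        intro k
        refine mul_le_mul_of_nonneg_left ?_ (HTAux.poissonWeight_nonneg hζ0 k)
        have hstep1 : (∑ e : Fin k → Fin N × Fin N, gibbs N k β e (fun σ => (mag N σ)^2))
            ≤ ∑ e : Fin k → Fin N × Fin N, ((N:ℝ) + HTAux.btot θ e) / (N:ℝ)^2 := by
          refine Finset.sum_le_sum fun e _ => ?_
          rw [HTAux.gibbs_mag_sq β e]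
          exact div_le_div_of_nonneg_right (HTAux.sum_gibbs_pairs_le hβ e) (by positivity)
        have hcard : ((Fintype.card (Fin k → Fin N × Fin N) : ℕ) : ℝ) = (N:ℝ)^(2*k) := by
          rw [Fintype.card_fun, Fintype.card_prod, Fintype.card_fin, Fintype.card_fin]
          push_cast
          ring
        have hstep2 : ∑ e : Fin k → Fin N × Fin N, ((N:ℝ) + HTAux.btot θ e) / (N:ℝ)^2
            = ((N:ℝ)^(2*k) * (N:ℝ) + ∑ e : Fin k → Fin N × Fin N, HTAux.btot θ e) / (N:ℝ)^2 := by
          rw [← Finset.sum_div, Finset.sum_add_distrib, Finset.sum_const, Finset.card_univ,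
            nsmul_eq_mul, hcard]
        calc (∑ e : Fin k → Fin N × Fin N, gibbs N k β e (fun σ => (mag N σ)^2)) / (N:ℝ)^(2*k)
            ≤ (∑ e : Fin k → Fin N × Fin N, ((N:ℝ) + HTAux.btot θ e) / (N:ℝ)^2) / (N:ℝ)^(2*k) :=
              div_le_div_of_nonneg_right hstep1 (by positivity)
          _ = 1/(N:ℝ) + (1/(N:ℝ)) *
              ∑ L ∈ Finset.Icc 1 k, (k.descFactorial L : ℝ) * (2*θ/(N:ℝ))^L := by
              rw [hstep2, HTAux.sum_e_btot θ, div_div,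
                div_eq_iff (by positivity : (N:ℝ)^2 * (N:ℝ)^(2*k) ≠ 0), add_mul]
              congr 1
              · field_simp
              · rw [mul_comm (1/(N:ℝ)), mul_assoc, Finset.sum_mul]
                refine Finset.sum_congr rfl fun L hL => ?_
                obtain ⟨hL1, hLk⟩ := Finset.mem_Icc.mp hL
                have hps : ((N:ℝ)^2)^(k-L) = ((N:ℝ)^2)^k / ((N:ℝ)^2)^L := by
                  rw [eq_div_iff (by positivity : ((N:ℝ)^2)^L ≠ 0), ← pow_add]
                  congr 1
                  omega
                rw [hps, div_pow, mul_pow]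
                have hp2 : ((N:ℝ)^2)^k = (N:ℝ)^(2*k) := by rw [← pow_mul, mul_comm]
                rw [hp2]
                field_simp
                ring
      calc ∑ k ∈ Finset.range M, poissonWeight (α * N) k *
            ((∑ e : Fin k → Fin N × Fin N, gibbs N k β e (fun σ => (mag N σ)^2)) / (N:ℝ)^(2*k))
          ≤ ∑ k ∈ Finset.range M, poissonWeight (α * N) k * (1/(N:ℝ) + (1/(N:ℝ)) *
              ∑ L ∈ Finset.Icc 1 k, (k.descFactorial L : ℝ) * (2*θ/(N:ℝ))^L) :=
            Finset.sum_le_sum fun k _ => hfk k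
        _ = (1/(N:ℝ)) * ∑ k ∈ Finset.range M, poissonWeight (α * N) k
            + (1/(N:ℝ)) * ∑ k ∈ Finset.range M, poissonWeight (α * N) k *
                ∑ L ∈ Finset.Icc 1 k, (k.descFactorial L : ℝ) * (2*θ/(N:ℝ))^L := by
            rw [Finset.sum_congr rfl fun k (_ : k ∈ Finset.range M) =>
              (by ring : poissonWeight (α * N) k * (1/(N:ℝ) + (1/(N:ℝ)) *
                ∑ L ∈ Finset.Icc 1 k, (k.descFactorial L : ℝ) * (2*θ/(N:ℝ))^L)
              = (1/(N:ℝ)) * poissonWeight (α * N) k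
                + (1/(N:ℝ)) * (poissonWeight (α * N) k *
                    ∑ L ∈ Finset.Icc 1 k, (k.descFactorial L : ℝ) * (2*θ/(N:ℝ))^L))]
            rw [Finset.sum_add_distrib, ← Finset.mul_sum, ← Finset.mul_sum]
        _ ≤ (1/(N:ℝ)) * 1 + (1/(N:ℝ)) * (1/(1-r)) := by
            refine add_le_add ?_ ?_
            · exact mul_le_mul_of_nonneg_left (HTAux.poisson_partial_le hζ0 M) (by positivity)
            · refine mul_le_mul_of_nonneg_left ?_ (by positivity)
              -- double sum bound
              have hext : ∀ k ∈ Finset.range M, poissonWeight (α * N) k *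
                  ∑ L ∈ Finset.Icc 1 k, (k.descFactorial L : ℝ) * (2*θ/(N:ℝ))^L
                  = ∑ L ∈ Finset.Icc 1 M, poissonWeight (α * N) k *
                      ((k.descFactorial L : ℝ) * (2*θ/(N:ℝ))^L) := by
                intro k hk
                rw [Finset.mul_sum]
                refine Finset.sum_subset
                  (Finset.Icc_subset_Icc_right (le_of_lt (Finset.mem_range.mp hk))) ?_
                intro L hL hLk
                rw [Finset.mem_Icc] at hL hLk
                have : k.descFactorial L = 0 :=
                  Nat.descFactorial_eq_zero_iff_lt.mpr (by omega)
                rw [this]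
                simp
              rw [Finset.sum_congr rfl hext, Finset.sum_comm]
              have hinner : ∀ L ∈ Finset.Icc 1 M, ∑ k ∈ Finset.range M,
                  poissonWeight (α * N) k * ((k.descFactorial L : ℝ) * (2*θ/(N:ℝ))^L)
                  ≤ r^L := by
                intro L _
                have h1 : ∑ k ∈ Finset.range M,
                    poissonWeight (α * N) k * ((k.descFactorial L : ℝ) * (2*θ/(N:ℝ))^L)
                    = (∑ k ∈ Finset.range M,
                        poissonWeight (α * N) k * (k.descFactorial L : ℝ)) * (2*θ/(N:ℝ))^L := by
                  rw [Finset.sum_mul]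
                  exact Finset.sum_congr rfl fun k _ => by ring
                rw [h1]
                have h2 := HTAux.poisson_desc_le hζ0 L M
                have h3 : (α * (N:ℝ))^L * (2*θ/(N:ℝ))^L = r^L := by
                  rw [← mul_pow]
                  congr 1
                  field_simp
                  ring
                calc (∑ k ∈ Finset.range M,
                      poissonWeight (α * N) k * (k.descFactorial L : ℝ)) * (2*θ/(N:ℝ))^L
                    ≤ (α * (N:ℝ))^L * (2*θ/(N:ℝ))^L :=
                      mul_le_mul_of_nonneg_right h2 (by positivity)
                  _ = r^L := h3
              calc ∑ L ∈ Finset.Icc 1 M, ∑ k ∈ Finset.range M,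
                    poissonWeight (α * N) k * ((k.descFactorial L : ℝ) * (2*θ/(N:ℝ))^L)
                  ≤ ∑ L ∈ Finset.Icc 1 M, r^L := Finset.sum_le_sum hinner
                _ ≤ ∑ L ∈ Finset.range (M+1), r^L := by
                    refine Finset.sum_le_sum_of_subset_of_nonneg ?_
                      (fun L _ _ => pow_nonneg hr0 L)
                    intro L hL
                    rw [Finset.mem_Icc] at hL
                    rw [Finset.mem_range]
                    omega
                _ ≤ 1/(1-r) := HTAux.geom_partial_le hr0 hr1 (M+1)
        _ = (1 + 1/(1-r))/(N:ℝ) := by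
            have h1r : (1 - r) ≠ 0 := ne_of_gt (by linarith)
            field_simp
end
end

section
/- In the high temperature region 2α·tanh(β) < 1, the derivative in α of the difference between the quenched pressure and the symmetric pressure is sandwiched as ⟨m²⟩·(ln 2)·tanh β ≤ ∂_α(A_N(α,β) − Ã_S(α,β)) ≤ ⟨m²⟩·tanh β, and in particular it is nonnegative. -/
open Filter Topology Finset

noncomputable section

/-- The quenched pressure `A_N(α,β) = (1/N) 𝔼 ln Z_N(β)`. -/
def pressure (N : ℕ) (α β : ℝ) : ℝ :=
  (quenchedExp N α (fun k e => Real.log (partZ N k β e))) / N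

open scoped Nat

lemma spin_mul_cases (a b : Bool) : spin a * spin b = 1 ∨ spin a * spin b = -1 := by
  cases a <;> cases b <;> simp [spin]

lemma abs_spin_mul (a b : Bool) : |spin a * spin b| ≤ 1 := by
  rcases spin_mul_cases a b with h | h <;> rw [h] <;> norm_num

lemma abs_ham_le (N k : ℕ) (e : Fin k → Fin N × Fin N) (σ : Fin N → Bool) :
    |ham N k e σ| ≤ k := by
  rw [ham, abs_neg]
  calc |∑ ν : Fin k, spin (σ (e ν).1) * spin (σ (e ν).2)|
      ≤ ∑ ν : Fin k, |spin (σ (e ν).1) * spin (σ (e ν).2)| := Finset.abs_sum_le_sum_abs _ _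
    _ ≤ ∑ _ν : Fin k, (1 : ℝ) := Finset.sum_le_sum fun ν _ => abs_spin_mul _ _
    _ = k := by simp

lemma partZ_pos (N k : ℕ) (β : ℝ) (e : Fin k → Fin N × Fin N) : 0 < partZ N k β e :=
  Finset.sum_pos (fun σ _ => Real.exp_pos _) ⟨fun _ => true, Finset.mem_univ _⟩

lemma abs_log_partZ_le (N k : ℕ) (β : ℝ) (hβ : 0 ≤ β) (e : Fin k → Fin N × Fin N) :
    |Real.log (partZ N k β e)| ≤ N * Real.log 2 + β * k := by
  have hcard : (Finset.univ : Finset (Fin N → Bool)).card = 2 ^ N := by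
    simp [Fintype.card_fun]
  have hbound : ∀ σ : Fin N → Bool, |(-β) * ham N k e σ| ≤ β * k := by
    intro σ
    rw [abs_mul, abs_neg, abs_of_nonneg hβ]
    exact mul_le_mul_of_nonneg_left (abs_ham_le N k e σ) hβ
  have hub : partZ N k β e ≤ 2 ^ N * Real.exp (β * k) := by
    rw [partZ]
    calc ∑ σ : Fin N → Bool, Real.exp (-β * ham N k e σ)
        ≤ ∑ _σ : Fin N → Bool, Real.exp (β * k) := by
          refine Finset.sum_le_sum fun σ _ => Real.exp_le_exp.2 ?_
          exact le_trans (le_abs_self _) (hbound σ)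
      _ = 2 ^ N * Real.exp (β * k) := by rw [Finset.sum_const, hcard]; push_cast; ring
  have hlb : 2 ^ N * Real.exp (-(β * k)) ≤ partZ N k β e := by
    rw [partZ]
    calc (2:ℝ) ^ N * Real.exp (-(β * k)) = ∑ _σ : Fin N → Bool, Real.exp (-(β * k)) := by
          rw [Finset.sum_const, hcard]; push_cast; ring
      _ ≤ ∑ σ : Fin N → Bool, Real.exp (-β * ham N k e σ) := by
          refine Finset.sum_le_sum fun σ _ => Real.exp_le_exp.2 ?_
          exact neg_le_of_abs_le (hbound σ)
  have hl2 : (0:ℝ) ≤ Real.log 2 := Real.log_nonneg (by norm_num)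
  have hbk : (0:ℝ) ≤ β * k := mul_nonneg hβ (Nat.cast_nonneg k)
  rw [abs_le]
  constructor
  · have := Real.log_le_log (by positivity) hlb
    rw [Real.log_mul (by positivity) (Real.exp_ne_zero _), Real.log_pow, Real.log_exp] at this
    have hN0 : (0:ℝ) ≤ (N:ℝ) * Real.log 2 := mul_nonneg (Nat.cast_nonneg N) hl2
    linarith
  · have := Real.log_le_log (partZ_pos N k β e) hub
    rw [Real.log_mul (by positivity) (Real.exp_ne_zero _), Real.log_pow, Real.log_exp] at this
    linarith

lemma gibbs_nonneg (N k : ℕ) (β : ℝ) (e : Fin k → Fin N × Fin N)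
    {O : (Fin N → Bool) → ℝ} (hO : ∀ σ, 0 ≤ O σ) : 0 ≤ gibbs N k β e O := by
  apply div_nonneg _ (partZ_pos N k β e).le
  exact Finset.sum_nonneg fun σ _ => mul_nonneg (Real.exp_pos _).le (hO σ)

lemma gibbs_le_one (N k : ℕ) (β : ℝ) (e : Fin k → Fin N × Fin N)
    {O : (Fin N → Bool) → ℝ} (hO : ∀ σ, O σ ≤ 1) : gibbs N k β e O ≤ 1 := by
  rw [gibbs, div_le_one (partZ_pos N k β e)]
  rw [partZ]
  exact Finset.sum_le_sum fun σ _ => by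
    nlinarith [Real.exp_pos (-β * ham N k e σ), hO σ]

lemma abs_gibbs_le_one (N k : ℕ) (β : ℝ) (e : Fin k → Fin N × Fin N)
    {O : (Fin N → Bool) → ℝ} (hO : ∀ σ, |O σ| ≤ 1) : |gibbs N k β e O| ≤ 1 := by
  rw [abs_le]
  constructor
  · rw [gibbs, le_div_iff₀ (partZ_pos N k β e), partZ, neg_one_mul, ← Finset.sum_neg_distrib]
    exact Finset.sum_le_sum fun σ _ => by
      nlinarith [Real.exp_pos (-β * ham N k e σ), abs_le.1 (hO σ)]
  · exact gibbs_le_one N k β e fun σ => le_trans (le_abs_self _) (hO σ)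

/-- the key monomial positivity: a sum over all spin configurations of a product of spins
is nonnegative. -/
lemma sum_prod_spin_nonneg {N : ℕ} {ι : Type*} [DecidableEq ι] (T : Finset ι) (g : ι → Fin N) :
    0 ≤ ∑ σ : Fin N → Bool, ∏ ν ∈ T, spin (σ (g ν)) := by
  have key : ∀ σ : Fin N → Bool,
      ∏ ν ∈ T, spin (σ (g ν)) = ∏ i : Fin N, spin (σ i) ^ (T.filter (fun ν => g ν = i)).card := by
    intro σ
    rw [← Finset.prod_fiberwise_of_maps_to (fun ν _ => Finset.mem_univ (g ν))
      (fun ν => spin (σ (g ν)))]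
    refine Finset.prod_congr rfl fun i _ => ?_
    rw [← Finset.prod_const]
    exact Finset.prod_congr rfl fun ν hν => by
      rw [(Finset.mem_filter.1 hν).2]
  rw [Finset.sum_congr rfl fun σ _ => key σ]
  have := Finset.sum_prod_piFinset (Finset.univ : Finset Bool)
    (fun (i : Fin N) (b : Bool) => spin b ^ (T.filter (fun ν => g ν = i)).card)
  rw [Fintype.piFinset_univ] at this
  rw [this]
  refine Finset.prod_nonneg fun i _ => ?_
  have : ∑ b : Bool, spin b ^ (T.filter (fun ν => g ν = i)).card
      = 1 + (-1 : ℝ) ^ (T.filter (fun ν => g ν = i)).card := by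
    simp [spin]
  rw [this]
  rcases neg_one_pow_eq_or ℝ (T.filter (fun ν => g ν = i)).card with h | h <;> rw [h] <;> norm_num

lemma exp_beta_spin (β : ℝ) (a b : Bool) :
    Real.exp (β * (spin a * spin b)) =
      Real.cosh β + Real.sinh β * (spin a * spin b) := by
  cases a <;> cases b <;> simp [spin, Real.cosh_add_sinh] <;>
    · rw [← Real.cosh_sub_sinh]
      simp [Real.cosh_neg, Real.sinh_neg, sub_eq_add_neg]

/-- Griffiths' first inequality: the two-point Gibbs correlation is nonnegative. -/
lemma gibbs_pair_nonneg (N k : ℕ) (β : ℝ) (hβ : 0 ≤ β) (e : Fin k → Fin N × Fin N)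
    (i0 j0 : Fin N) : 0 ≤ gibbs N k β e (fun σ => spin (σ i0) * spin (σ j0)) := by
  apply div_nonneg _ (partZ_pos N k β e).le
  have hexp : ∀ σ : Fin N → Bool, Real.exp (-β * ham N k e σ) =
      ∏ ν : Fin k, (Real.cosh β + Real.sinh β * (spin (σ (e ν).1) * spin (σ (e ν).2))) := by
    intro σ
    rw [ham, neg_mul_neg, Finset.mul_sum, Real.exp_sum]
    exact Finset.prod_congr rfl fun ν _ => exp_beta_spin β _ _
  have expand : ∀ σ : Fin N → Bool, Real.exp (-β * ham N k e σ) *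
        (spin (σ i0) * spin (σ j0)) =
      ∑ t ∈ (Finset.univ : Finset (Fin k)).powerset,
        Real.cosh β ^ t.card * Real.sinh β ^ (Finset.univ \ t).card *
          ((∏ ν ∈ Finset.univ \ t, spin (σ (e ν).1) * spin (σ (e ν).2)) *
            (spin (σ i0) * spin (σ j0))) := by
    intro σ
    rw [hexp σ, Finset.prod_add, Finset.sum_mul]
    refine Finset.sum_congr rfl fun t _ => ?_
    rw [Finset.prod_const, Finset.prod_mul_distrib, Finset.prod_const]
    ring
  rw [Finset.sum_congr rfl fun σ _ => expand σ, Finset.sum_comm]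
  refine Finset.sum_nonneg fun t _ => ?_
  have key := sum_prod_spin_nonneg
    (((Finset.univ \ t) ×ˢ (Finset.univ : Finset Bool)).disjSum (Finset.univ : Finset Bool))
    (Sum.elim (fun q : Fin k × Bool => if q.2 then (e q.1).1 else (e q.1).2)
      (fun b : Bool => if b then i0 else j0))
  have hprod : ∀ σ : Fin N → Bool,
      (∏ ν ∈ ((Finset.univ \ t) ×ˢ (Finset.univ : Finset Bool)).disjSum
          (Finset.univ : Finset Bool),
        spin (σ (Sum.elim (fun q : Fin k × Bool => if q.2 then (e q.1).1 else (e q.1).2)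
          (fun b : Bool => if b then i0 else j0) ν)))
      = (∏ ν ∈ Finset.univ \ t, spin (σ (e ν).1) * spin (σ (e ν).2)) *
          (spin (σ i0) * spin (σ j0)) := by
    intro σ
    rw [Finset.prod_disjSum, Finset.prod_product]
    congr 1
    · exact Finset.prod_congr rfl fun ν _ => by simp [Fintype.prod_bool]
    · simp [Fintype.prod_bool]
  rw [← Finset.mul_sum]
  refine mul_nonneg (mul_nonneg (pow_nonneg ((Real.cosh_pos β).le) _)
      (pow_nonneg (Real.sinh_nonneg_iff.2 hβ) _)) ?_
  exact le_trans key (le_of_eq (Finset.sum_congr rfl fun σ _ => hprod σ))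

lemma tanh_nonneg' {β : ℝ} (hβ : 0 ≤ β) : 0 ≤ Real.tanh β := by
  rw [Real.tanh_eq_sinh_div_cosh]
  exact div_nonneg (Real.sinh_nonneg_iff.2 hβ) (Real.cosh_pos β).le

lemma tanh_lt_one' (β : ℝ) : Real.tanh β < 1 := by
  rw [Real.tanh_eq_sinh_div_cosh, div_lt_one (Real.cosh_pos β)]
  exact Real.sinh_lt_cosh β

/-- `log(1+x)` is sandwiched between `x log 2` and `x` on `[0,1]`. -/
lemma log_one_add_sandwich {x : ℝ} (h0 : 0 ≤ x) (h1 : x ≤ 1) :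
    x * Real.log 2 ≤ Real.log (1 + x) ∧ Real.log (1 + x) ≤ x := by
  constructor
  · rw [Real.le_log_iff_exp_le (by linarith)]
    have hconv := convexOn_exp.2 (Set.mem_univ (0:ℝ)) (Set.mem_univ (Real.log 2))
      (by linarith : (0:ℝ) ≤ 1 - x) h0 (by ring)
    simp only [smul_eq_mul, mul_zero, zero_add, Real.exp_zero,
      Real.exp_log (by norm_num : (0:ℝ) < 2)] at hconv
    calc Real.exp (x * Real.log 2) ≤ (1 - x) * 1 + x * 2 := hconv
      _ = 1 + x := by ring
  · calc Real.log (1 + x) ≤ Real.log (Real.exp x) := by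
          apply Real.log_le_log (by linarith)
          linarith [Real.add_one_le_exp x]
      _ = x := Real.log_exp x

/-- The pair correlation, as a function of the extra edge. -/
def pairCorr (N k : ℕ) (β : ℝ) (e : Fin k → Fin N × Fin N) (p : Fin N × Fin N) : ℝ :=
  gibbs N k β e (fun σ => spin (σ p.1) * spin (σ p.2))

lemma pairCorr_mem (N k : ℕ) (β : ℝ) (hβ : 0 ≤ β) (e : Fin k → Fin N × Fin N)
    (p : Fin N × Fin N) : 0 ≤ pairCorr N k β e p ∧ pairCorr N k β e p ≤ 1 := by
  refine ⟨gibbs_pair_nonneg N k β hβ e p.1 p.2, gibbs_le_one N k β e fun σ => ?_⟩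
  rcases spin_mul_cases (σ p.1) (σ p.2) with h | h <;> rw [h] <;> norm_num

/-- The one-edge recursion for the partition function. -/
lemma partZ_cons (N k : ℕ) (β : ℝ) (e : Fin k → Fin N × Fin N) (p : Fin N × Fin N) :
    partZ N (k + 1) β (Fin.cons p e) =
      partZ N k β e * (Real.cosh β * (1 + Real.tanh β * pairCorr N k β e p)) := by
  have hham : ∀ σ : Fin N → Bool, ham N (k+1) (Fin.cons p e) σ
      = ham N k e σ - spin (σ p.1) * spin (σ p.2) := by
    intro σ
    rw [ham, ham, Fin.sum_univ_succ]
    simp only [Fin.cons_zero, Fin.cons_succ]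
    ring
  have hterm : ∀ σ : Fin N → Bool,
      Real.exp (-β * ham N (k+1) (Fin.cons p e) σ) =
        Real.exp (-β * ham N k e σ) * Real.cosh β +
          Real.sinh β * (Real.exp (-β * ham N k e σ) * (spin (σ p.1) * spin (σ p.2))) := by
    intro σ
    rw [hham σ, show -β * (ham N k e σ - spin (σ p.1) * spin (σ p.2))
        = -β * ham N k e σ + β * (spin (σ p.1) * spin (σ p.2)) from by ring,
      Real.exp_add, exp_beta_spin]
    ring
  rw [partZ, Finset.sum_congr rfl fun σ _ => hterm σ, Finset.sum_add_distrib,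
    ← Finset.sum_mul, ← Finset.mul_sum]
  have hZ : (0:ℝ) < partZ N k β e := partZ_pos N k β e
  have hnum : ∑ σ : Fin N → Bool, Real.exp (-β * ham N k e σ) * (spin (σ p.1) * spin (σ p.2))
      = pairCorr N k β e p * partZ N k β e := by
    rw [pairCorr, gibbs, div_mul_cancel₀]
    exact hZ.ne'
  rw [← partZ, hnum, Real.tanh_eq_sinh_div_cosh]
  have hc : Real.cosh β ≠ 0 := (Real.cosh_pos β).ne'
  field_simp

lemma one_add_tanh_pairCorr_pos (N k : ℕ) (β : ℝ) (hβ : 0 ≤ β) (e : Fin k → Fin N × Fin N)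
    (p : Fin N × Fin N) : (0:ℝ) < 1 + Real.tanh β * pairCorr N k β e p := by
  have h := pairCorr_mem N k β hβ e p
  nlinarith [tanh_nonneg' hβ]

lemma log_partZ_cons (N k : ℕ) (β : ℝ) (hβ : 0 ≤ β) (e : Fin k → Fin N × Fin N)
    (p : Fin N × Fin N) :
    Real.log (partZ N (k + 1) β (Fin.cons p e)) =
      Real.log (partZ N k β e) + Real.log (Real.cosh β) +
        Real.log (1 + Real.tanh β * pairCorr N k β e p) := by
  rw [partZ_cons, Real.log_mul (partZ_pos N k β e).ne'
      (mul_pos (Real.cosh_pos β) (one_add_tanh_pairCorr_pos N k β hβ e p)).ne',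
    Real.log_mul (Real.cosh_pos β).ne' (one_add_tanh_pairCorr_pos N k β hβ e p).ne', add_assoc]

/-- Linearity of the Gibbs average. -/
lemma gibbs_sum_div {N k : ℕ} {β : ℝ} {e : Fin k → Fin N × Fin N} {ι : Type*}
    (s : Finset ι) (f : ι → (Fin N → Bool) → ℝ) (c : ℝ) :
    gibbs N k β e (fun σ => (∑ p ∈ s, f p σ) / c) = (∑ p ∈ s, gibbs N k β e (f p)) / c := by
  rw [gibbs]
  have hnum : ∑ σ : Fin N → Bool, Real.exp (-β * ham N k e σ) * ((∑ p ∈ s, f p σ) / c)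
      = (∑ p ∈ s, ∑ σ : Fin N → Bool, Real.exp (-β * ham N k e σ) * f p σ) / c :=
    calc ∑ σ : Fin N → Bool, Real.exp (-β * ham N k e σ) * ((∑ p ∈ s, f p σ) / c)
        = ∑ σ : Fin N → Bool, (∑ p ∈ s, Real.exp (-β * ham N k e σ) * f p σ) / c := by
          refine Finset.sum_congr rfl fun σ _ => ?_
          rw [← mul_div_assoc, Finset.mul_sum]
      _ = (∑ σ : Fin N → Bool, ∑ p ∈ s, Real.exp (-β * ham N k e σ) * f p σ) / c := by
          rw [Finset.sum_div]
      _ = _ := by rw [Finset.sum_comm]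
  rw [hnum, div_right_comm, Finset.sum_div]
  rfl

lemma mag_sq_eq (N : ℕ) (σ : Fin N → Bool) :
    mag N σ ^ 2 = (∑ p : Fin N × Fin N, spin (σ p.1) * spin (σ p.2)) / (N:ℝ) ^ 2 := by
  rw [mag, div_pow, sq, Finset.sum_mul_sum]
  exact congrArg (· / ((N:ℝ) ^ 2))
    (Fintype.sum_prod_type (fun p : Fin N × Fin N => spin (σ p.1) * spin (σ p.2))).symm

lemma gibbs_mag_sq (N k : ℕ) (β : ℝ) (e : Fin k → Fin N × Fin N) :
    gibbs N k β e (fun σ => mag N σ ^ 2)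
      = (∑ p : Fin N × Fin N, pairCorr N k β e p) / (N:ℝ) ^ 2 := by
  rw [show (fun σ : Fin N → Bool => mag N σ ^ 2)
      = fun σ => (∑ p : Fin N × Fin N, spin (σ p.1) * spin (σ p.2)) / (N:ℝ) ^ 2 from
    funext fun σ => mag_sq_eq N σ]
  exact gibbs_sum_div Finset.univ _ _

lemma mag_sq_mem (N : ℕ) (σ : Fin N → Bool) : 0 ≤ mag N σ ^ 2 ∧ mag N σ ^ 2 ≤ 1 := by
  refine ⟨sq_nonneg _, ?_⟩
  have habs : |mag N σ| ≤ 1 := by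
    rw [mag, abs_div]
    rcases Nat.eq_zero_or_pos N with h | h
    · subst h; simp
    · rw [abs_of_nonneg (Nat.cast_nonneg N : (0:ℝ) ≤ N), div_le_one (by positivity)]
      calc |∑ i : Fin N, spin (σ i)| ≤ ∑ i : Fin N, |spin (σ i)| := Finset.abs_sum_le_sum_abs _ _
        _ ≤ ∑ _i : Fin N, (1:ℝ) := Finset.sum_le_sum fun i _ => by
            cases (σ i) <;> simp [spin]
        _ = N := by simp
  have h := abs_le.1 habs
  nlinarith [h.1, h.2]

lemma gibbs_mag_sq_mem (N k : ℕ) (β : ℝ) (e : Fin k → Fin N × Fin N) :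
    0 ≤ gibbs N k β e (fun σ => mag N σ ^ 2) ∧ gibbs N k β e (fun σ => mag N σ ^ 2) ≤ 1 :=
  ⟨gibbs_nonneg N k β e fun σ => (mag_sq_mem N σ).1,
   gibbs_le_one N k β e fun σ => (mag_sq_mem N σ).2⟩

def logZsum (N k : ℕ) (β : ℝ) : ℝ :=
  (∑ e : Fin k → Fin N × Fin N, Real.log (partZ N k β e)) / (N:ℝ) ^ (2 * k)

def Dk (N k : ℕ) (β : ℝ) : ℝ :=
  (∑ e : Fin k → Fin N × Fin N, ∑ p : Fin N × Fin N,
      Real.log (1 + Real.tanh β * pairCorr N k β e p)) / (N:ℝ) ^ (2 * (k + 1))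

def Mk (N k : ℕ) (β : ℝ) : ℝ :=
  (∑ e : Fin k → Fin N × Fin N, gibbs N k β e (fun σ => mag N σ ^ 2)) / (N:ℝ) ^ (2 * k)

lemma card_edges (N k : ℕ) : (Fintype.card (Fin k → Fin N × Fin N) : ℝ) = (N:ℝ) ^ (2 * k) := by
  simp only [Fintype.card_fun, Fintype.card_prod, Fintype.card_fin]
  rw [pow_mul]
  push_cast
  ring

lemma pow_two_mul_succ (N k : ℕ) : (N:ℝ) ^ (2 * (k + 1)) = (N:ℝ) ^ 2 * (N:ℝ) ^ (2 * k) := by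
  rw [← pow_add]
  congr 1
  ring

lemma logZsum_succ (N k : ℕ) (hN : 1 ≤ N) (β : ℝ) (hβ : 0 ≤ β) :
    logZsum N (k + 1) β = logZsum N k β + Real.log (Real.cosh β) + Dk N k β := by
  have hNpos : (0:ℝ) < (N:ℝ) := by exact_mod_cast hN
  have hcardE : (Fintype.card (Fin k → Fin N × Fin N) : ℝ) = (N:ℝ) ^ (2 * k) := card_edges N k
  have hcardP : ((Fintype.card (Fin N × Fin N) : ℕ) : ℝ) = (N:ℝ) ^ 2 := by
    rw [Fintype.card_prod, Fintype.card_fin]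
    push_cast
    ring
  have hsum : ∑ e' : Fin (k+1) → Fin N × Fin N, Real.log (partZ N (k+1) β e')
      = (N:ℝ) ^ 2 * (∑ e : Fin k → Fin N × Fin N, Real.log (partZ N k β e))
        + (N:ℝ) ^ (2 * (k + 1)) * Real.log (Real.cosh β)
        + ∑ e : Fin k → Fin N × Fin N, ∑ p : Fin N × Fin N,
            Real.log (1 + Real.tanh β * pairCorr N k β e p) := by
    rw [← Fintype.sum_equiv (Fin.consEquiv (fun _ : Fin (k+1) => Fin N × Fin N))
      (fun q => Real.log (partZ N (k+1) β (Fin.cons q.1 q.2)))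
      (fun e' => Real.log (partZ N (k+1) β e')) (fun q => by
        congr 1)]
    rw [Fintype.sum_prod_type]
    rw [Finset.sum_congr rfl fun p _ => Finset.sum_congr rfl fun e _ =>
      log_partZ_cons N k β hβ e p]
    have h1 : ∀ p : Fin N × Fin N, ∑ e : Fin k → Fin N × Fin N,
        (Real.log (partZ N k β e) + Real.log (Real.cosh β) +
          Real.log (1 + Real.tanh β * pairCorr N k β e p))
        = (∑ e : Fin k → Fin N × Fin N, Real.log (partZ N k β e))
          + (N:ℝ) ^ (2 * k) * Real.log (Real.cosh β)
          + ∑ e : Fin k → Fin N × Fin N, Real.log (1 + Real.tanh β * pairCorr N k β e p) := by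
      intro p
      rw [Finset.sum_add_distrib, Finset.sum_add_distrib, Finset.sum_const, Finset.card_univ,
        nsmul_eq_mul, hcardE]
    rw [Finset.sum_congr rfl fun p _ => h1 p, Finset.sum_add_distrib, Finset.sum_add_distrib,
      Finset.sum_const, Finset.sum_const, Finset.card_univ, nsmul_eq_mul, nsmul_eq_mul, hcardP,
      Finset.sum_comm, pow_two_mul_succ]
    ring
  rw [logZsum, logZsum, Dk, hsum, pow_two_mul_succ]
  have hne : (N:ℝ) ^ (2 * k) ≠ 0 := by positivity
  have hne2 : (N:ℝ) ^ 2 ≠ 0 := by positivity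
  field_simp

lemma Mk_eq (N k : ℕ) (β : ℝ) :
    Mk N k β = (∑ e : Fin k → Fin N × Fin N, ∑ p : Fin N × Fin N, pairCorr N k β e p) /
      (N:ℝ) ^ (2 * (k + 1)) := by
  rw [Mk, Finset.sum_congr rfl fun e _ => gibbs_mag_sq N k β e, ← Finset.sum_div, div_div,
    pow_two_mul_succ]

lemma Mk_mem (N k : ℕ) (hN : 1 ≤ N) (β : ℝ) : 0 ≤ Mk N k β ∧ Mk N k β ≤ 1 := by
  have hNpos : (0:ℝ) < (N:ℝ) := by exact_mod_cast hN
  constructor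
  · exact div_nonneg (Finset.sum_nonneg fun e _ => (gibbs_mag_sq_mem N k β e).1) (by positivity)
  · have hpow : (0:ℝ) < (N:ℝ) ^ (2 * k) := by positivity
    rw [Mk, div_le_one hpow]
    calc ∑ e : Fin k → Fin N × Fin N, gibbs N k β e (fun σ => mag N σ ^ 2)
        ≤ ∑ _e : Fin k → Fin N × Fin N, (1:ℝ) :=
          Finset.sum_le_sum fun e _ => (gibbs_mag_sq_mem N k β e).2
      _ = (N:ℝ) ^ (2 * k) := by
          rw [Finset.sum_const, Finset.card_univ, nsmul_eq_mul, mul_one, card_edges]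

lemma Dk_sandwich (N k : ℕ) (hN : 1 ≤ N) (β : ℝ) (hβ : 0 ≤ β) :
    Real.log 2 * Real.tanh β * Mk N k β ≤ Dk N k β ∧
      Dk N k β ≤ Real.tanh β * Mk N k β := by
  have hNpos : (0:ℝ) < (N:ℝ) := by exact_mod_cast hN
  have hc : (0:ℝ) < (N:ℝ) ^ (2 * (k + 1)) := by positivity
  have hterm : ∀ (e : Fin k → Fin N × Fin N) (p : Fin N × Fin N),
      (Real.tanh β * pairCorr N k β e p) * Real.log 2
          ≤ Real.log (1 + Real.tanh β * pairCorr N k β e p) ∧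
        Real.log (1 + Real.tanh β * pairCorr N k β e p) ≤ Real.tanh β * pairCorr N k β e p := by
    intro e p
    have hpc := pairCorr_mem N k β hβ e p
    have ht0 := tanh_nonneg' hβ
    have ht1 := (tanh_lt_one' β).le
    exact log_one_add_sandwich (mul_nonneg ht0 hpc.1) (by nlinarith)
  constructor
  · rw [Dk, Mk_eq, ← mul_div_assoc]
    refine div_le_div_of_nonneg_right ?_ hc.le
    rw [Finset.mul_sum]
    refine Finset.sum_le_sum fun e _ => ?_
    rw [Finset.mul_sum]
    refine Finset.sum_le_sum fun p _ => ?_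
    have h := (hterm e p).1
    calc Real.log 2 * Real.tanh β * pairCorr N k β e p
        = (Real.tanh β * pairCorr N k β e p) * Real.log 2 := by ring
      _ ≤ _ := h
  · rw [Dk, Mk_eq, ← mul_div_assoc]
    refine div_le_div_of_nonneg_right ?_ hc.le
    rw [Finset.mul_sum]
    refine Finset.sum_le_sum fun e _ => ?_
    rw [Finset.mul_sum]
    exact Finset.sum_le_sum fun p _ => (hterm e p).2

lemma poissonWeight_nonneg {ζ : ℝ} (hζ : 0 ≤ ζ) (k : ℕ) : 0 ≤ poissonWeight ζ k := by
  rw [poissonWeight]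
  positivity

lemma tsum_poissonWeight {ζ : ℝ} : ∑' k : ℕ, poissonWeight ζ k = 1 := by
  rw [show (fun k : ℕ => poissonWeight ζ k) = fun k : ℕ => Real.exp (-ζ) * (ζ ^ k / k !) from
    funext fun k => by rw [poissonWeight, mul_div_assoc]]
  rw [tsum_mul_left]
  have h : ∑' k : ℕ, ζ ^ k / (k ! : ℝ) = Real.exp ζ := by
    rw [Real.exp_eq_exp_ℝ, NormedSpace.exp_eq_tsum_div]
  rw [h, ← Real.exp_add]
  simp

lemma summable_pw_row (ζ : ℝ) : Summable (fun k : ℕ => poissonWeight ζ k) := by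
  rw [show (fun k : ℕ => poissonWeight ζ k) = fun k : ℕ => Real.exp (-ζ) * (ζ ^ k / k !) from
    funext fun k => by rw [poissonWeight, mul_div_assoc]]
  exact (Real.summable_pow_div_factorial ζ).mul_left _

/-- helper: `(k+1)^2 ≤ 4 * 4^k`. -/
lemma sq_succ_le (k : ℕ) : ((k:ℝ) + 1) ^ 2 ≤ 4 * 4 ^ k := by
  induction k with
  | zero => norm_num
  | succ n ih =>
      have h4 : (0:ℝ) ≤ 4 ^ n := by positivity
      have h1 : (1:ℝ) ≤ 4 ^ n := one_le_pow₀ (by norm_num)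
      rw [pow_succ (4:ℝ) n]
      push_cast
      push_cast at ih
      nlinarith [ih, h4, h1, Nat.cast_nonneg (α := ℝ) n]

/-- master summability lemma: anything dominated by `C (k+1)² r^k / k!` is summable. -/
lemma summable_of_poly_fact {f : ℕ → ℝ} (C r : ℝ) (hr : 0 ≤ r)
    (h : ∀ k, |f k| ≤ C * ((k:ℝ) + 1) ^ 2 * r ^ k / k !) : Summable f := by
  have hC : 0 ≤ C := by
    have := (abs_nonneg (f 0)).trans (h 0)
    norm_num at this
    nlinarith
  apply Summable.of_norm
  refine Summable.of_nonneg_of_le (fun k => norm_nonneg _) (fun k => ?_)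
    (((Real.summable_pow_div_factorial (4 * r)).mul_left (4 * C)))
  calc ‖f k‖ ≤ C * ((k:ℝ) + 1) ^ 2 * r ^ k / k ! := h k
    _ ≤ C * (4 * 4 ^ k) * r ^ k / k ! := by
        have hk : (0:ℝ) < k ! := by positivity
        have hrk : (0:ℝ) ≤ r ^ k := by positivity
        have := sq_succ_le k
        apply div_le_div_of_nonneg_right _ hk.le
        have := mul_le_mul_of_nonneg_right (mul_le_mul_of_nonneg_left (sq_succ_le k) hC) hrk
        linarith
    _ = 4 * C * ((4 * r) ^ k / k !) := by rw [mul_pow]; ring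

lemma summable_pw_poly {ζ : ℝ} (hζ : 0 ≤ ζ) {c : ℕ → ℝ} (A B : ℝ)
    (hc : ∀ k, |c k| ≤ A + B * k) : Summable (fun k => poissonWeight ζ k * c k) := by
  have hA : 0 ≤ A := by have := (abs_nonneg (c 0)).trans (hc 0); simpa using this
  have hB' : ∀ k : ℕ, A + B * k ≤ (A + |B|) * ((k:ℝ) + 1) := by
    intro k
    have h1 : B * k ≤ |B| * k := mul_le_mul_of_nonneg_right (le_abs_self B) (Nat.cast_nonneg k)
    have h2 : (0:ℝ) ≤ |B| := abs_nonneg B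
    have h3 : (0:ℝ) ≤ (k:ℝ) := Nat.cast_nonneg k
    nlinarith
  refine summable_of_poly_fact ((A + |B|) * 1) (ζ + 1) (by linarith) (fun k => ?_)
  have hpw : |poissonWeight ζ k| ≤ (ζ + 1) ^ k / k ! := by
    rw [poissonWeight, abs_div, abs_of_nonneg (by positivity : (0:ℝ) ≤ Real.exp (-ζ) * ζ ^ k),
      abs_of_nonneg (Nat.cast_nonneg (k !) : (0:ℝ) ≤ (k ! : ℝ))]
    have hk : (0:ℝ) < k ! := by positivity
    apply div_le_div_of_nonneg_right _ hk.le
    calc Real.exp (-ζ) * ζ ^ k ≤ 1 * ζ ^ k := by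
          apply mul_le_mul_of_nonneg_right _ (by positivity)
          rw [Real.exp_le_one_iff]
          linarith
      _ = ζ ^ k := one_mul _
      _ ≤ (ζ + 1) ^ k := pow_le_pow_left₀ (by linarith) (by linarith) k
  have hub : |c k| ≤ (A + |B|) * ((k:ℝ) + 1) := le_trans (hc k) (hB' k)
  calc |poissonWeight ζ k * c k| = |poissonWeight ζ k| * |c k| := abs_mul _ _
    _ ≤ ((ζ + 1) ^ k / k !) * ((A + |B|) * ((k:ℝ) + 1)) := by
        apply mul_le_mul hpw hub (abs_nonneg _) (by positivity)
    _ ≤ (A + |B|) * 1 * ((k:ℝ) + 1) ^ 2 * (ζ + 1) ^ k / k ! := by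
        have hk : (0:ℝ) < k ! := by positivity
        rw [div_mul_eq_mul_div, mul_one]
        apply div_le_div_of_nonneg_right _ hk.le
        have h1 : ((k:ℝ) + 1) ≤ ((k:ℝ) + 1) ^ 2 := by nlinarith [Nat.cast_nonneg (α := ℝ) k]
        have h2 : (0:ℝ) ≤ (ζ + 1) ^ k := by positivity
        have h3 : (0:ℝ) ≤ (A + |B|) := by positivity
        nlinarith [mul_le_mul_of_nonneg_left h1 (mul_nonneg h3 h2)]

lemma logZsum_abs_le (N k : ℕ) (hN : 1 ≤ N) (β : ℝ) (hβ : 0 ≤ β) :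
    |logZsum N k β| ≤ (N:ℝ) * Real.log 2 + β * k := by
  have hNpos : (0:ℝ) < (N:ℝ) := by exact_mod_cast hN
  have hpow : (0:ℝ) < (N:ℝ) ^ (2 * k) := by positivity
  rw [logZsum, abs_div, abs_of_nonneg hpow.le, div_le_iff₀ hpow]
  calc |∑ e : Fin k → Fin N × Fin N, Real.log (partZ N k β e)|
      ≤ ∑ e : Fin k → Fin N × Fin N, |Real.log (partZ N k β e)| :=
        Finset.abs_sum_le_sum_abs _ _
    _ ≤ ∑ _e : Fin k → Fin N × Fin N, ((N:ℝ) * Real.log 2 + β * k) :=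
        Finset.sum_le_sum fun e _ => abs_log_partZ_le N k β hβ e
    _ = ((N:ℝ) * Real.log 2 + β * k) * (N:ℝ) ^ (2 * k) := by
        rw [Finset.sum_const, Finset.card_univ, nsmul_eq_mul, card_edges]
        ring

lemma Dk_abs_le (N k : ℕ) (hN : 1 ≤ N) (β : ℝ) (hβ : 0 ≤ β) : |Dk N k β| ≤ 1 := by
  have hs := Dk_sandwich N k hN β hβ
  have hM := Mk_mem N k hN β
  have ht0 := tanh_nonneg' hβ
  have ht1 := (tanh_lt_one' β).le
  have hl2 : (0:ℝ) ≤ Real.log 2 := Real.log_nonneg (by norm_num)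
  rw [abs_le]
  have h0 : 0 ≤ Real.log 2 * Real.tanh β * Mk N k β :=
    mul_nonneg (mul_nonneg hl2 ht0) hM.1
  have h1 : Real.tanh β * Mk N k β ≤ 1 := mul_le_one₀ ht1 hM.1 hM.2
  exact ⟨by linarith [hs.1], by linarith [hs.2]⟩

/-- The derivative of the Poisson weight in `α`. -/
def pwd (N : ℕ) (k : ℕ) (a : ℝ) : ℝ :=
  ((-(N:ℝ)) * Real.exp (-(a * N)) * (a * N) ^ k
    + Real.exp (-(a * N)) * ((k:ℝ) * (a * N) ^ (k - 1) * N)) / (k ! : ℝ)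

lemma hasDerivAt_pw (N : ℕ) (k : ℕ) (a : ℝ) :
    HasDerivAt (fun a : ℝ => poissonWeight (a * N) k) (pwd N k a) a := by
  have h1 : HasDerivAt (fun a : ℝ => a * (N:ℝ)) (N:ℝ) a := hasDerivAt_mul_const (N:ℝ)
  have h2 : HasDerivAt (fun a : ℝ => Real.exp (-(a * N)))
      (Real.exp (-(a * N)) * (-(N:ℝ))) a := by
    have := (Real.hasDerivAt_exp (-(a * (N:ℝ)))).comp a h1.neg
    exact this.congr_deriv (by ring)
  have h3 : HasDerivAt (fun a : ℝ => (a * (N:ℝ)) ^ k)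
      ((k:ℝ) * (a * N) ^ (k - 1) * (N:ℝ)) a := h1.pow k
  have h := (h2.mul h3).div_const ((k ! : ℕ) : ℝ)
  have heq : (fun a : ℝ => Real.exp (-(a * N)) * (a * N) ^ k / ((k ! : ℕ) : ℝ))
      = fun a : ℝ => poissonWeight (a * N) k := by
    funext x
    rw [poissonWeight]
  simp only [Pi.mul_apply] at h
  rw [heq] at h
  refine h.congr_deriv ?_
  rw [pwd]
  ring

lemma pwd_zero (N : ℕ) (a : ℝ) : pwd N 0 a = -(N:ℝ) * poissonWeight (a * N) 0 := by
  rw [pwd, poissonWeight]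
  simp [Nat.factorial]

lemma pwd_succ (N k : ℕ) (a : ℝ) :
    pwd N (k + 1) a = (N:ℝ) * (poissonWeight (a * N) k - poissonWeight (a * N) (k + 1)) := by
  rw [pwd, poissonWeight, poissonWeight, Nat.factorial_succ]
  have hk : ((k ! : ℕ) : ℝ) ≠ 0 := by positivity
  have hcast : (((k + 1) * k ! : ℕ) : ℝ) = ((k:ℝ) + 1) * ((k ! : ℕ) : ℝ) := by
    push_cast
    ring
  rw [hcast, Nat.add_sub_cancel]
  field_simp
  push_cast
  ring

lemma pwd_abs_bound (N k : ℕ) {a X : ℝ} (ha : 0 ≤ a) (haX : a * N ≤ X) :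
    |pwd N k a| ≤ (N:ℝ) * ((k:ℝ) + 1) * (X + 1) ^ k / (k ! : ℝ) := by
  have hx0 : (0:ℝ) ≤ a * N := mul_nonneg ha (Nat.cast_nonneg N)
  have hX0 : (0:ℝ) ≤ X := le_trans hx0 haX
  have hX1 : (1:ℝ) ≤ X + 1 := by linarith
  have hexp : Real.exp (-(a * N)) ≤ 1 := by
    rw [Real.exp_le_one_iff]
    linarith
  have hexp0 : (0:ℝ) ≤ Real.exp (-(a * N)) := (Real.exp_pos _).le
  have hpk : (a * N) ^ k ≤ (X + 1) ^ k :=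
    pow_le_pow_left₀ hx0 (by linarith) k
  have hpk1 : (a * N) ^ (k - 1) ≤ (X + 1) ^ k := by
    calc (a * N) ^ (k - 1) ≤ (X + 1) ^ (k - 1) := pow_le_pow_left₀ hx0 (by linarith) _
      _ ≤ (X + 1) ^ k := pow_le_pow_right₀ hX1 (Nat.sub_le k 1)
  have hfk : (0:ℝ) < (k ! : ℝ) := by positivity
  rw [pwd, abs_div, abs_of_nonneg hfk.le]
  apply div_le_div_of_nonneg_right _ hfk.le
  have hx0k : (0:ℝ) ≤ (a*N) ^ k := by positivity
  have hx0k1 : (0:ℝ) ≤ (a*N) ^ (k-1) := by positivity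
  calc |(-(N:ℝ)) * Real.exp (-(a * N)) * (a * N) ^ k
        + Real.exp (-(a * N)) * ((k:ℝ) * (a * N) ^ (k - 1) * N)|
      ≤ |(-(N:ℝ)) * Real.exp (-(a * N)) * (a * N) ^ k|
        + |Real.exp (-(a * N)) * ((k:ℝ) * (a * N) ^ (k - 1) * N)| := abs_add_le _ _
    _ = (N:ℝ) * Real.exp (-(a * N)) * (a * N) ^ k
        + Real.exp (-(a * N)) * ((k:ℝ) * (a * N) ^ (k - 1) * N) := by
        have e1 : |(-(N:ℝ)) * Real.exp (-(a * N)) * (a * N) ^ k|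
            = (N:ℝ) * Real.exp (-(a * N)) * (a * N) ^ k := by
          rw [show (-(N:ℝ)) * Real.exp (-(a * N)) * (a * N) ^ k
              = -((N:ℝ) * Real.exp (-(a * N)) * (a * N) ^ k) from by ring, abs_neg,
            abs_of_nonneg (by positivity)]
        have e2 : |Real.exp (-(a * N)) * ((k:ℝ) * (a * N) ^ (k - 1) * N)|
            = Real.exp (-(a * N)) * ((k:ℝ) * (a * N) ^ (k - 1) * N) :=
          abs_of_nonneg (by positivity)
        rw [e1, e2]
    _ ≤ (N:ℝ) * 1 * (X + 1) ^ k + 1 * ((k:ℝ) * (X + 1) ^ k * N) := by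
        have hN0 : (0:ℝ) ≤ (N:ℝ) := Nat.cast_nonneg N
        have hk0 : (0:ℝ) ≤ (k:ℝ) := Nat.cast_nonneg k
        have t1 : (N:ℝ) * Real.exp (-(a * N)) * (a * N) ^ k ≤ (N:ℝ) * 1 * (X + 1) ^ k := by
          apply mul_le_mul (by nlinarith) hpk hx0k (by nlinarith)
        have t2 : Real.exp (-(a * N)) * ((k:ℝ) * (a * N) ^ (k - 1) * N)
            ≤ 1 * ((k:ℝ) * (X + 1) ^ k * N) := by
          apply mul_le_mul hexp _ (by positivity) (by norm_num)
          apply mul_le_mul_of_nonneg_right _ hN0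
          exact mul_le_mul_of_nonneg_left hpk1 hk0
        linarith
    _ = (N:ℝ) * ((k:ℝ) + 1) * (X + 1) ^ k := by ring

lemma hasDerivAt_quenched (N : ℕ) (hN : 1 ≤ N) (α β : ℝ) (hα : 0 < α) (hβ : 0 ≤ β) :
    HasDerivAt (fun a : ℝ => ∑' k : ℕ, poissonWeight (a * N) k * logZsum N k β)
      (∑' k : ℕ, pwd N k α * logZsum N k β) α := by
  have hNpos : (0:ℝ) < (N:ℝ) := by exact_mod_cast hN
  set A : ℝ := (N:ℝ) * Real.log 2 with hA
  set X : ℝ := (α + 1) * N with hX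
  have hA0 : 0 ≤ A := mul_nonneg (Nat.cast_nonneg N) (Real.log_nonneg (by norm_num))
  have hX0 : 0 ≤ X := by positivity
  have hL : ∀ k : ℕ, |logZsum N k β| ≤ A + β * k := fun k => logZsum_abs_le N k hN β hβ
  have hu_sum : Summable (fun k : ℕ =>
      ((N:ℝ) * (A + β)) * ((k:ℝ) + 1) ^ 2 * (X + 1) ^ k / (k ! : ℝ)) := by
    refine summable_of_poly_fact ((N:ℝ) * (A + β)) (X + 1) (by linarith) (fun k => ?_)
    rw [abs_of_nonneg (by positivity)]
  refine hasDerivAt_tsum_of_isPreconnected hu_sum isOpen_Ioo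
    ((convex_Ioo (0:ℝ) (α + 1)).isPreconnected)
    (fun k a _ => (hasDerivAt_pw N k a).mul_const (logZsum N k β))
    (fun k a haI => ?_) (show α ∈ Set.Ioo 0 (α + 1) from ⟨hα, by linarith⟩)
    (summable_pw_poly (by positivity) A β hL)
    (show α ∈ Set.Ioo 0 (α + 1) from ⟨hα, by linarith⟩)
  have haX : a * N ≤ X := mul_le_mul_of_nonneg_right (le_of_lt haI.2) (Nat.cast_nonneg N)
  have h1 := pwd_abs_bound N k (le_of_lt haI.1) haX
  have h2' : |logZsum N k β| ≤ (A + β) * ((k:ℝ) + 1) := by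
    have := hL k
    have hk0 : (0:ℝ) ≤ (k:ℝ) := Nat.cast_nonneg k
    have hbk : β * (k:ℝ) ≤ β * (k:ℝ) := le_refl _
    nlinarith
  calc ‖pwd N k a * logZsum N k β‖ = |pwd N k a| * |logZsum N k β| := by
        rw [Real.norm_eq_abs, abs_mul]
    _ ≤ ((N:ℝ) * ((k:ℝ) + 1) * (X + 1) ^ k / (k ! : ℝ)) * ((A + β) * ((k:ℝ) + 1)) :=
        mul_le_mul h1 h2' (abs_nonneg _) (by positivity)
    _ = ((N:ℝ) * (A + β)) * ((k:ℝ) + 1) ^ 2 * (X + 1) ^ k / (k ! : ℝ) := by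
        field_simp

lemma tsum_pwd_eq (N : ℕ) (hN : 1 ≤ N) (α β : ℝ) (hα : 0 < α) (hβ : 0 ≤ β) :
    ∑' k : ℕ, pwd N k α * logZsum N k β
      = (N:ℝ) * (Real.log (Real.cosh β)
          + ∑' k : ℕ, poissonWeight (α * N) k * Dk N k β) := by
  have hNpos : (0:ℝ) < (N:ℝ) := by exact_mod_cast hN
  have hζ : (0:ℝ) ≤ α * N := by positivity
  set w : ℕ → ℝ := fun k => poissonWeight (α * N) k with hw
  set L : ℕ → ℝ := fun k => logZsum N k β with hLdef
  have hL : ∀ k : ℕ, |L k| ≤ (N:ℝ) * Real.log 2 + β * k := fun k => logZsum_abs_le N k hN β hβ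
  have hs1 : Summable (fun k => w k * L k) := summable_pw_poly hζ _ β hL
  have hL2 : ∀ k : ℕ, |L (k + 1)| ≤ ((N:ℝ) * Real.log 2 + β) + β * k := by
    intro k
    have := hL (k + 1)
    push_cast at this ⊢
    linarith
  have hs2 : Summable (fun k => w k * L (k + 1)) := summable_pw_poly hζ _ β hL2
  have hs3 : Summable (fun k => w (k + 1) * L (k + 1)) := (summable_nat_add_iff 1).2 hs1
  have hDb : ∀ k : ℕ, |Dk N k β| ≤ 1 + 0 * k := fun k => by
    simpa using Dk_abs_le N k hN β hβ
  have hsD : Summable (fun k => w k * Dk N k β) := summable_pw_poly hζ 1 0 hDb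
  have hslc : Summable (fun k => w k * Real.log (Real.cosh β)) :=
    (summable_pw_row (α * N)).mul_right _
  have hsucc : ∀ k : ℕ, L (k + 1) = L k + Real.log (Real.cosh β) + Dk N k β := fun k =>
    logZsum_succ N k hN β hβ
  have hf : ∀ k : ℕ, pwd N (k + 1) α * L (k + 1)
      = (N:ℝ) * (w k * L (k + 1)) - (N:ℝ) * (w (k + 1) * L (k + 1)) := by
    intro k
    rw [pwd_succ]
    ring
  have hsf' : Summable (fun k => pwd N (k + 1) α * L (k + 1)) := by
    rw [show (fun k => pwd N (k + 1) α * L (k + 1))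
        = fun k => (N:ℝ) * (w k * L (k + 1)) - (N:ℝ) * (w (k + 1) * L (k + 1)) from funext hf]
    exact (hs2.mul_left _).sub (hs3.mul_left _)
  have hsf : Summable (fun k => pwd N k α * L k) := by
    refine (summable_nat_add_iff 1).1 ?_
    exact hsf'
  rw [hsf.tsum_eq_zero_add]
  have e0 : ∑' k : ℕ, pwd N (k + 1) α * L (k + 1)
      = (N:ℝ) * (∑' k : ℕ, w k * L (k + 1)) - (N:ℝ) * (∑' k : ℕ, w (k + 1) * L (k + 1)) := by
    rw [show (fun k => pwd N (k + 1) α * L (k + 1))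
        = fun k => (N:ℝ) * (w k * L (k + 1)) - (N:ℝ) * (w (k + 1) * L (k + 1)) from funext hf]
    rw [Summable.tsum_sub (hs2.mul_left _) (hs3.mul_left _), tsum_mul_left, tsum_mul_left]
  have e1 : ∑' k : ℕ, w (k + 1) * L (k + 1) = (∑' k : ℕ, w k * L k) - w 0 * L 0 := by
    rw [hs1.tsum_eq_zero_add]
    ring
  have e2 : ∑' k : ℕ, w k * L (k + 1)
      = (∑' k : ℕ, w k * L k) + Real.log (Real.cosh β) + ∑' k : ℕ, w k * Dk N k β := by
    have heq : (fun k => w k * L (k + 1))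
        = fun k => (w k * L k) + (w k * Real.log (Real.cosh β) + w k * Dk N k β) := by
      funext k
      rw [hsucc k]
      ring
    rw [heq, Summable.tsum_add hs1 (hslc.add hsD), Summable.tsum_add hslc hsD, tsum_mul_right, tsum_poissonWeight]
    ring
  rw [e0, e1, e2, pwd_zero]
  ring

/-- In the high temperature region `2 α tanh β < 1`, the derivative in
`α` of the difference between the quenched pressure and the symmetric pressure
`Ã_S(α,β) = ln 2 + α ln cosh β` is sandwiched as
`⟨m²⟩ (ln 2) tanh β ≤ ∂_α(A_N − Ã_S) ≤ ⟨m²⟩ tanh β`, and in particular it is nonnegative. -/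
theorem pressure_diff_derivative_sandwich
    (N : ℕ) (hN : 1 ≤ N) (α β : ℝ) (hα : 0 < α) (hβ : 0 ≤ β)
    (hHT : 2 * α * Real.tanh β < 1) (d : ℝ)
    (hd : HasDerivAt
      (fun a : ℝ => pressure N a β - (Real.log 2 + a * Real.log (Real.cosh β))) d α) :
    qGibbs N α β (fun σ => (mag N σ) ^ 2) * Real.log 2 * Real.tanh β ≤ d
    ∧ d ≤ qGibbs N α β (fun σ => (mag N σ) ^ 2) * Real.tanh β
    ∧ 0 ≤ d := by
  have hNpos : (0:ℝ) < (N:ℝ) := by exact_mod_cast hN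
  have hζ : (0:ℝ) ≤ α * N := by positivity
  have hl2 : (0:ℝ) ≤ Real.log 2 := Real.log_nonneg (by norm_num)
  have ht0 : 0 ≤ Real.tanh β := tanh_nonneg' hβ
  have hpress : (fun a : ℝ => pressure N a β)
      = fun a : ℝ => (∑' k : ℕ, poissonWeight (a * N) k * logZsum N k β) / N := rfl
  have hq : qGibbs N α β (fun σ => (mag N σ) ^ 2)
      = ∑' k : ℕ, poissonWeight (α * N) k * Mk N k β := rfl
  have hderP : HasDerivAt (fun a : ℝ => pressure N a β)
      ((∑' k : ℕ, pwd N k α * logZsum N k β) / N) α := by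
    rw [hpress]
    exact (hasDerivAt_quenched N hN α β hα hβ).div_const _
  have hlin : HasDerivAt (fun a : ℝ => Real.log 2 + a * Real.log (Real.cosh β))
      (Real.log (Real.cosh β)) α :=
    (hasDerivAt_mul_const (Real.log (Real.cosh β))).const_add (Real.log 2)
  have hdiff := hderP.sub hlin
  have hd_eq : d = ∑' k : ℕ, poissonWeight (α * N) k * Dk N k β := by
    have h1 := hd.unique hdiff
    rw [h1, tsum_pwd_eq N hN α β hα hβ]
    field_simp
    ring
  set w : ℕ → ℝ := fun k => poissonWeight (α * N) k with hw
  have hw0 : ∀ k, 0 ≤ w k := fun k => poissonWeight_nonneg hζ k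
  have hM1 : ∀ k : ℕ, |Mk N k β| ≤ 1 + 0 * (k:ℝ) := by
    intro k
    have h := Mk_mem N k hN β
    rw [abs_le]
    constructor <;> [linarith [h.1]; simpa using h.2]
  have hsM : Summable (fun k => w k * Mk N k β) := summable_pw_poly hζ 1 0 hM1
  have hDb : ∀ k : ℕ, |Dk N k β| ≤ 1 + 0 * (k:ℝ) := fun k => by
    simpa using Dk_abs_le N k hN β hβ
  have hsD : Summable (fun k => w k * Dk N k β) := summable_pw_poly hζ 1 0 hDb
  have hsetl : (fun k => w k * (Real.log 2 * Real.tanh β * Mk N k β))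
      = fun k => (Real.log 2 * Real.tanh β) * (w k * Mk N k β) := funext fun k => by ring
  have hsetu : (fun k => w k * (Real.tanh β * Mk N k β))
      = fun k => Real.tanh β * (w k * Mk N k β) := funext fun k => by ring
  have hslow : Summable (fun k => w k * (Real.log 2 * Real.tanh β * Mk N k β)) := by
    rw [hsetl]
    exact hsM.mul_left _
  have hsup : Summable (fun k => w k * (Real.tanh β * Mk N k β)) := by
    rw [hsetu]
    exact hsM.mul_left _
  have hlow : qGibbs N α β (fun σ => (mag N σ) ^ 2) * Real.log 2 * Real.tanh β ≤ d := by
    rw [hd_eq, hq]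
    calc (∑' k : ℕ, w k * Mk N k β) * Real.log 2 * Real.tanh β
        = ∑' k : ℕ, w k * (Real.log 2 * Real.tanh β * Mk N k β) := by
          rw [hsetl, tsum_mul_left]
          ring
      _ ≤ ∑' k : ℕ, w k * Dk N k β :=
          Summable.tsum_le_tsum (fun k => mul_le_mul_of_nonneg_left
            (Dk_sandwich N k hN β hβ).1 (hw0 k)) hslow hsD
  have hup : d ≤ qGibbs N α β (fun σ => (mag N σ) ^ 2) * Real.tanh β := by
    rw [hd_eq, hq]
    calc ∑' k : ℕ, w k * Dk N k β
        ≤ ∑' k : ℕ, w k * (Real.tanh β * Mk N k β) :=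
          Summable.tsum_le_tsum (fun k => mul_le_mul_of_nonneg_left
            (Dk_sandwich N k hN β hβ).2 (hw0 k)) hsD hsup
      _ = (∑' k : ℕ, w k * Mk N k β) * Real.tanh β := by
          rw [hsetu, tsum_mul_left]
          ring
  have hq0 : 0 ≤ qGibbs N α β (fun σ => (mag N σ) ^ 2) := by
    rw [hq]
    exact tsum_nonneg fun k => mul_nonneg (hw0 k) (Mk_mem N k hN β).1
  refine ⟨hlow, hup, ?_⟩
  have h0 : 0 ≤ qGibbs N α β (fun σ => (mag N σ) ^ 2) * Real.log 2 * Real.tanh β :=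
    mul_nonneg (mul_nonneg hq0 hl2) ht0
  linarith
end
end

section
/- Fix 0 < λ₀ < 1 and for α with 2α·tanh β ≤ λ₀ set λ(α) = λ₀ − 2α·tanh β ≥ 0. Then the function α ↦ Ā_N(λ(α)) (the perturbed pressure evaluated along this line) satisfies d/dα [Ā_N(λ(α))] ≤ ln cosh β, and hence Ā_N(λ(α)) ≤ Ā_N(λ₀)|_{α=0} + α·ln cosh β. -/
open Filter Topology Finset

noncomputable section

/-- The perturbed quenched pressure `Ā_N(λ) = (1/N) 𝔼 ln ∑_σ exp(-β H_N(σ) + λ N m(σ)²/2)`. -/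
def pertPressure (N : ℕ) (α β lam : ℝ) : ℝ :=
  (quenchedExp N α (fun k e => Real.log (∑ σ : Fin N → Bool,
    Real.exp (-β * ham N k e σ + lam * N * (mag N σ) ^ 2 / 2)))) / N

namespace PertAux

lemma spin_cases (b : Bool) : spin b = 1 ∨ spin b = -1 := by cases b <;> simp [spin]

lemma abs_spin (b : Bool) : |spin b| = 1 := by cases b <;> simp [spin]

lemma abs_ham_le (N k : ℕ) (e : Fin k → Fin N × Fin N) (σ : Fin N → Bool) :
    |ham N k e σ| ≤ k := by
  rw [ham, abs_neg]
  calc |∑ ν : Fin k, spin (σ (e ν).1) * spin (σ (e ν).2)|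
      ≤ ∑ ν : Fin k, |spin (σ (e ν).1) * spin (σ (e ν).2)| := Finset.abs_sum_le_sum_abs _ _
    _ = ∑ ν : Fin k, (1:ℝ) := by simp [abs_mul, abs_spin]
    _ = k := by simp

lemma abs_mag_le (N : ℕ) (hN : 1 ≤ N) (σ : Fin N → Bool) : |mag N σ| ≤ 1 := by
  have hNpos : (0:ℝ) < N := by exact_mod_cast hN
  rw [mag, abs_div, abs_of_pos hNpos, div_le_one hNpos]
  calc |∑ i : Fin N, spin (σ i)| ≤ ∑ i : Fin N, |spin (σ i)| := Finset.abs_sum_le_sum_abs _ _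
    _ = N := by simp [abs_spin]

lemma mag_sq_le_one (N : ℕ) (hN : 1 ≤ N) (σ : Fin N → Bool) : (mag N σ)^2 ≤ 1 := by
  have := abs_mag_le N hN σ
  nlinarith [abs_nonneg (mag N σ), sq_abs (mag N σ)]

lemma mag_sq_nonneg (N : ℕ) (σ : Fin N → Bool) : 0 ≤ (mag N σ)^2 := sq_nonneg _

/-- The perturbed partition function. -/
def Zp (N k : ℕ) (β lam : ℝ) (e : Fin k → Fin N × Fin N) : ℝ :=
  ∑ σ : Fin N → Bool, Real.exp (-β * ham N k e σ + lam * N * (mag N σ) ^ 2 / 2)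

def bfun (N k : ℕ) (β lam : ℝ) : ℝ :=
  (∑ e : Fin k → Fin N × Fin N, Real.log (Zp N k β lam e)) / (N : ℝ) ^ (2 * k)

def Om2 (N k : ℕ) (β lam : ℝ) (e : Fin k → Fin N × Fin N) : ℝ :=
  (∑ σ : Fin N → Bool,
      Real.exp (-β * ham N k e σ + lam * N * (mag N σ) ^ 2 / 2) * (mag N σ)^2)
    / Zp N k β lam e

def cfun (N k : ℕ) (β lam : ℝ) : ℝ :=
  (∑ e : Fin k → Fin N × Fin N, Om2 N k β lam e) / (N : ℝ) ^ (2 * k)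

lemma Zp_pos (N k : ℕ) (β lam : ℝ) (e : Fin k → Fin N × Fin N) : 0 < Zp N k β lam e :=
  Finset.sum_pos (fun σ _ => Real.exp_pos _) ⟨fun _ => true, Finset.mem_univ _⟩

lemma pertPressure_eq (N : ℕ) (α β lam : ℝ) :
    pertPressure N α β lam = (∑' k : ℕ, poissonWeight (α * N) k * bfun N k β lam) / N := rfl

end PertAux

namespace PertAux

lemma abs_expo_le (N k : ℕ) (hN : 1 ≤ N) (β lam : ℝ) (hβ : 0 ≤ β)
    (e : Fin k → Fin N × Fin N) (σ : Fin N → Bool) :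
    |(-β * ham N k e σ + lam * N * (mag N σ) ^ 2 / 2)| ≤ β * k + |lam| * N / 2 := by
  have h1 : |(-β * ham N k e σ)| ≤ β * k := by
    rw [abs_mul, abs_neg, abs_of_nonneg hβ]
    exact mul_le_mul_of_nonneg_left (abs_ham_le N k e σ) hβ
  have h2 : |lam * N * (mag N σ) ^ 2 / 2| ≤ |lam| * N / 2 := by
    rw [abs_div, abs_mul, abs_mul]
    have hm : |(mag N σ)^2| ≤ 1 := by
      rw [abs_of_nonneg (sq_nonneg _)]; exact mag_sq_le_one N hN σ
    have hNn : |(N:ℝ)| = (N:ℝ) := abs_of_nonneg (Nat.cast_nonneg N)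
    rw [hNn]
    have : |lam| * (N:ℝ) * |(mag N σ)^2| ≤ |lam| * N * 1 := by
      apply mul_le_mul_of_nonneg_left hm (by positivity)
    simp only [abs_two]
    nlinarith
  calc |(-β * ham N k e σ + lam * N * (mag N σ) ^ 2 / 2)|
      ≤ |(-β * ham N k e σ)| + |lam * N * (mag N σ) ^ 2 / 2| := abs_add_le _ _
    _ ≤ β * k + |lam| * N / 2 := add_le_add h1 h2

lemma abs_log_Zp_le (N k : ℕ) (hN : 1 ≤ N) (β lam : ℝ) (hβ : 0 ≤ β)
    (e : Fin k → Fin N × Fin N) :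
    |Real.log (Zp N k β lam e)| ≤ N * Real.log 2 + (β * k + |lam| * N / 2) := by
  set B : ℝ := β * k + |lam| * N / 2 with hB
  have hB0 : 0 ≤ B := by positivity
  have hupper : Zp N k β lam e ≤ (2:ℝ)^N * Real.exp B := by
    rw [Zp]
    calc ∑ σ : Fin N → Bool, Real.exp (-β * ham N k e σ + lam * N * (mag N σ) ^ 2 / 2)
        ≤ ∑ σ : Fin N → Bool, Real.exp B := by
          apply Finset.sum_le_sum
          intro σ _
          apply Real.exp_le_exp.2
          exact le_trans (le_abs_self _) (abs_expo_le N k hN β lam hβ e σ)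
      _ = (2:ℝ)^N * Real.exp B := by
          rw [Finset.sum_const]
          simp [Fintype.card_fun]
  have hlower : Real.exp (-B) ≤ Zp N k β lam e := by
    have : Real.exp (-B) ≤ Real.exp (-β * ham N k e (fun _ => true)
        + lam * N * (mag N (fun _ => true)) ^ 2 / 2) := by
      apply Real.exp_le_exp.2
      have := abs_expo_le N k hN β lam hβ e (fun _ => true)
      have := neg_abs_le (-β * ham N k e (fun _ => true)
        + lam * N * (mag N (fun _ => true)) ^ 2 / 2)
      linarith [abs_expo_le N k hN β lam hβ e (fun _ => true)]
    refine le_trans this ?_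
    rw [Zp]
    exact Finset.single_le_sum (f := fun σ : Fin N → Bool =>
      Real.exp (-β * ham N k e σ + lam * N * (mag N σ) ^ 2 / 2))
      (fun σ _ => (Real.exp_pos _).le) (Finset.mem_univ _)
  have hpos := Zp_pos N k β lam e
  rw [abs_le]
  constructor
  · have : Real.log (Real.exp (-B)) ≤ Real.log (Zp N k β lam e) :=
      Real.log_le_log (Real.exp_pos _) hlower
    rw [Real.log_exp] at this
    have hN2 : 0 ≤ (N:ℝ) * Real.log 2 := by positivity
    linarith
  · have : Real.log (Zp N k β lam e) ≤ Real.log ((2:ℝ)^N * Real.exp B) :=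
      Real.log_le_log hpos hupper
    rw [Real.log_mul (by positivity) (Real.exp_ne_zero _), Real.log_exp,
      Real.log_pow] at this
    exact this

lemma card_e (N k : ℕ) (hN : 1 ≤ N) :
    ((Fintype.card (Fin k → Fin N × Fin N) : ℝ)) = (N:ℝ) ^ (2*k) := by
  rw [Fintype.card_fun, Fintype.card_prod, Fintype.card_fin, Fintype.card_fin]
  push_cast
  rw [pow_mul]
  ring

lemma abs_bfun_le (N k : ℕ) (hN : 1 ≤ N) (β lam : ℝ) (hβ : 0 ≤ β) :
    |bfun N k β lam| ≤ N * Real.log 2 + (β * k + |lam| * N / 2) := by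
  have hNpos : (0:ℝ) < (N:ℝ)^(2*k) := by positivity
  rw [bfun, abs_div, abs_of_pos hNpos, div_le_iff₀ hNpos]
  calc |∑ e : Fin k → Fin N × Fin N, Real.log (Zp N k β lam e)|
      ≤ ∑ e : Fin k → Fin N × Fin N, |Real.log (Zp N k β lam e)| :=
        Finset.abs_sum_le_sum_abs _ _
    _ ≤ ∑ e : Fin k → Fin N × Fin N, (N * Real.log 2 + (β * k + |lam| * N / 2)) :=
        Finset.sum_le_sum (fun e _ => abs_log_Zp_le N k hN β lam hβ e)
    _ = (N * Real.log 2 + (β * k + |lam| * N / 2)) * (N:ℝ)^(2*k) := by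
        rw [Finset.sum_const, ← card_e N k hN]; simp; ring

lemma Om2_nonneg (N k : ℕ) (β lam : ℝ) (e : Fin k → Fin N × Fin N) :
    0 ≤ Om2 N k β lam e := by
  apply div_nonneg _ (Zp_pos N k β lam e).le
  exact Finset.sum_nonneg fun σ _ => mul_nonneg (Real.exp_pos _).le (sq_nonneg _)

lemma Om2_le_one (N k : ℕ) (hN : 1 ≤ N) (β lam : ℝ) (e : Fin k → Fin N × Fin N) :
    Om2 N k β lam e ≤ 1 := by
  rw [Om2, div_le_one (Zp_pos N k β lam e)]
  rw [Zp]
  apply Finset.sum_le_sum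
  intro σ _
  have := mag_sq_le_one N hN σ
  nlinarith [Real.exp_pos (-β * ham N k e σ + lam * N * (mag N σ) ^ 2 / 2)]

lemma cfun_nonneg (N k : ℕ) (β lam : ℝ) : 0 ≤ cfun N k β lam := by
  apply div_nonneg _ (by positivity)
  exact Finset.sum_nonneg fun e _ => Om2_nonneg N k β lam e

lemma cfun_le_one (N k : ℕ) (hN : 1 ≤ N) (β lam : ℝ) : cfun N k β lam ≤ 1 := by
  have hNpos : (0:ℝ) < (N:ℝ)^(2*k) := by positivity
  rw [cfun, div_le_one hNpos]
  calc ∑ e : Fin k → Fin N × Fin N, Om2 N k β lam e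
      ≤ ∑ e : Fin k → Fin N × Fin N, (1:ℝ) :=
        Finset.sum_le_sum fun e _ => Om2_le_one N k hN β lam e
    _ = (N:ℝ)^(2*k) := by rw [Finset.sum_const, ← card_e N k hN]; simp

end PertAux

namespace PertAux

lemma hasDerivAt_log_Zp (N k : ℕ) (β lam : ℝ) (e : Fin k → Fin N × Fin N) :
    HasDerivAt (fun l : ℝ => Real.log (Zp N k β l e))
      ((N:ℝ)/2 * Om2 N k β lam e) lam := by
  have hsum : HasDerivAt (fun l : ℝ => Zp N k β l e)
      (∑ σ : Fin N → Bool,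
        Real.exp (-β * ham N k e σ + lam * N * (mag N σ) ^ 2 / 2)
          * ((1 * (N:ℝ)) * (mag N σ)^2 / 2)) lam := by
    apply HasDerivAt.fun_sum
    intro σ _
    have hlin : HasDerivAt (fun l : ℝ => -β * ham N k e σ + l * N * (mag N σ) ^ 2 / 2)
        ((1 * (N:ℝ)) * (mag N σ)^2 / 2) lam :=
      ((((hasDerivAt_id lam).mul_const ((N:ℝ))).mul_const ((mag N σ)^2)).div_const 2).const_add
        (-β * ham N k e σ)
    simpa using hlin.exp
  have hZ := (Zp_pos N k β lam e).ne'
  have := hsum.log hZ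
  convert this using 1
  have hnum : ∑ σ : Fin N → Bool,
      Real.exp (-β * ham N k e σ + lam * N * (mag N σ) ^ 2 / 2) * ((1 * (N:ℝ)) * (mag N σ)^2 / 2)
      = (N:ℝ)/2 * ∑ σ : Fin N → Bool,
        Real.exp (-β * ham N k e σ + lam * N * (mag N σ) ^ 2 / 2) * (mag N σ)^2 := by
    rw [Finset.mul_sum]
    apply Finset.sum_congr rfl
    intro σ _
    ring
  rw [Om2, hnum, mul_div_assoc]

lemma hasDerivAt_bfun (N k : ℕ) (β lam : ℝ) :
    HasDerivAt (fun l : ℝ => bfun N k β l) ((N:ℝ)/2 * cfun N k β lam) lam := by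
  have h : HasDerivAt (fun l : ℝ => ∑ e : Fin k → Fin N × Fin N, Real.log (Zp N k β l e))
      (∑ e : Fin k → Fin N × Fin N, (N:ℝ)/2 * Om2 N k β lam e) lam :=
    HasDerivAt.fun_sum (fun e _ => hasDerivAt_log_Zp N k β lam e)
  have := h.div_const ((N:ℝ)^(2*k))
  refine this.congr_deriv ?_
  rw [cfun, ← Finset.mul_sum]
  ring

lemma hasDerivAt_bfun_line (N k : ℕ) (β lam₀ a : ℝ) :
    HasDerivAt (fun a : ℝ => bfun N k β (lam₀ - 2 * a * Real.tanh β))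
      (-((N:ℝ) * Real.tanh β * cfun N k β (lam₀ - 2 * a * Real.tanh β))) a := by
  have hinner : HasDerivAt (fun a : ℝ => lam₀ - 2 * a * Real.tanh β)
      (-(2 * Real.tanh β)) a := by
    have : HasDerivAt (fun a : ℝ => 2 * a * Real.tanh β) (2 * Real.tanh β) a := by
      simpa using ((hasDerivAt_id a).const_mul 2).mul_const (Real.tanh β)
    simpa using this.const_sub lam₀
  have houter := hasDerivAt_bfun N k β (lam₀ - 2 * a * Real.tanh β)
  have := HasDerivAt.comp a houter hinner
  refine this.congr_deriv ?_
  ring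

/-- derivative of the Poisson weight in `ζ`. -/
def pwd (ζ : ℝ) : ℕ → ℝ
  | 0 => -poissonWeight ζ 0
  | (k+1) => poissonWeight ζ k - poissonWeight ζ (k+1)

lemma hasDerivAt_poissonWeight (ζ : ℝ) (k : ℕ) :
    HasDerivAt (fun ζ : ℝ => poissonWeight ζ k) (pwd ζ k) ζ := by
  have hexp : HasDerivAt (fun ζ : ℝ => Real.exp (-ζ)) (-Real.exp (-ζ)) ζ := by
    simpa using ((hasDerivAt_id ζ).neg).exp
  have hpow : HasDerivAt (fun ζ : ℝ => ζ ^ k) ((k:ℝ) * ζ ^ (k-1)) ζ := by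
    simpa using hasDerivAt_pow k ζ
  have hmul := (hexp.mul hpow).div_const ((Nat.factorial k : ℝ))
  have : HasDerivAt (fun ζ : ℝ => poissonWeight ζ k)
      ((-Real.exp (-ζ) * ζ ^ k + Real.exp (-ζ) * ((k:ℝ) * ζ ^ (k-1))) / (Nat.factorial k)) ζ := by
    simpa [poissonWeight] using hmul
  convert this using 1
  cases k with
  | zero => simp [pwd, poissonWeight]
  | succ n =>
    simp only [pwd, poissonWeight]
    rw [Nat.factorial_succ]
    push_cast
    have hfac : ((Nat.factorial n : ℝ)) ≠ 0 := by positivity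
    field_simp
    ring

end PertAux

namespace PertAux

lemma tanh_nonneg {β : ℝ} (hβ : 0 ≤ β) : 0 ≤ Real.tanh β := by
  rw [Real.tanh_eq_sinh_div_cosh]
  apply div_nonneg _ (Real.cosh_pos β).le
  rw [Real.sinh_eq]
  have : Real.exp (-β) ≤ Real.exp β := Real.exp_le_exp.2 (by linarith)
  linarith

lemma tanh_lt_one (β : ℝ) : Real.tanh β < 1 := by
  rw [Real.tanh_eq_sinh_div_cosh, div_lt_one (Real.cosh_pos β)]
  have := Real.cosh_sub_sinh β
  have := Real.exp_pos (-β)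
  linarith

lemma exp_beta_spin (β s : ℝ) (hs : s = 1 ∨ s = -1) :
    Real.exp (β * s) = Real.cosh β * (1 + Real.tanh β * s) := by
  have hc := (Real.cosh_pos β).ne'
  rcases hs with h | h <;> subst h
  · rw [mul_one, mul_one, Real.tanh_eq_sinh_div_cosh]
    field_simp
    exact (Real.cosh_add_sinh β).symm
  · rw [Real.tanh_eq_sinh_div_cosh]
    field_simp
    have := Real.cosh_sub_sinh β
    linarith

/-- Uniform bound for the Poisson weight. -/
def qb (R : ℝ) (k : ℕ) : ℝ := Real.exp R * R ^ k / (Nat.factorial k)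

def qbs (R : ℝ) : ℕ → ℝ
  | 0 => 0
  | (k+1) => qb R k

lemma qb_nonneg {R : ℝ} (hR : 0 ≤ R) (k : ℕ) : 0 ≤ qb R k := by
  unfold qb; positivity

lemma abs_poissonWeight_le {R ζ : ℝ} (hζ : |ζ| ≤ R) (k : ℕ) :
    |poissonWeight ζ k| ≤ qb R k := by
  have hR : 0 ≤ R := le_trans (abs_nonneg ζ) hζ
  rw [poissonWeight, qb, abs_div, abs_mul, Nat.abs_cast]
  apply div_le_div_of_nonneg_right _ (by positivity)
  · apply mul_le_mul
    · rw [Real.abs_exp]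
      exact Real.exp_le_exp.2 (le_trans (neg_le_abs ζ) hζ)
    · rw [abs_pow]
      exact pow_le_pow_left₀ (abs_nonneg ζ) hζ k
    · positivity
    · positivity

lemma abs_pwd_le {R ζ : ℝ} (hζ : |ζ| ≤ R) (k : ℕ) :
    |pwd ζ k| ≤ qbs R k + qb R k := by
  cases k with
  | zero =>
    simp only [pwd, qbs, abs_neg, zero_add]
    exact abs_poissonWeight_le hζ 0
  | succ n =>
    simp only [pwd, qbs]
    refine le_trans (abs_sub _ _) ?_
    exact add_le_add (abs_poissonWeight_le hζ n) (abs_poissonWeight_le hζ (n+1))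

lemma summable_qb_linear (R C D : ℝ) : Summable (fun k : ℕ => qb R k * (C + D * k)) := by
  have h1 : Summable (fun k : ℕ => (R^k / (Nat.factorial k)) * C) :=
    (Real.summable_pow_div_factorial R).mul_right C
  have h2 : Summable (fun k : ℕ => (k:ℝ) * R^k / (Nat.factorial k)) := by
    rw [← summable_nat_add_iff 1]
    have : (fun k : ℕ => ((k+1:ℕ):ℝ) * R^(k+1) / (Nat.factorial (k+1)))
        = fun k : ℕ => R * (R^k / (Nat.factorial k)) := by
      funext k
      rw [Nat.factorial_succ]
      push_cast
      have : ((Nat.factorial k : ℝ)) ≠ 0 := by positivity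
      field_simp
      ring
    rw [this]
    exact (Real.summable_pow_div_factorial R).mul_left R
  have := ((h1.add (h2.mul_right D)).mul_left (Real.exp R))
  apply Summable.congr this
  intro k
  unfold qb
  field_simp

lemma summable_qbs_linear (R C D : ℝ) : Summable (fun k : ℕ => qbs R k * (C + D * k)) := by
  rw [← summable_nat_add_iff 1]
  have : (fun k : ℕ => qbs R (k+1) * (C + D * (k+1:ℕ)))
      = fun k : ℕ => qb R k * ((C + D) + D * k) := by
    funext k
    simp only [qbs]
    push_cast
    ring
  rw [this]
  exact summable_qb_linear R (C+D) D

lemma summable_qb (R : ℝ) : Summable (qb R) := by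
  have := summable_qb_linear R 1 0
  simpa using this

lemma poissonWeight_nonneg {ζ : ℝ} (hζ : 0 ≤ ζ) (k : ℕ) : 0 ≤ poissonWeight ζ k := by
  unfold poissonWeight; positivity

lemma tsum_poissonWeight (ζ : ℝ) : ∑' k : ℕ, poissonWeight ζ k = 1 := by
  have h : (fun k : ℕ => poissonWeight ζ k)
      = fun k : ℕ => Real.exp (-ζ) * (ζ^k / (Nat.factorial k)) := by
    funext k; rw [poissonWeight, mul_div_assoc]
  rw [h, tsum_mul_left]
  have : ∑' k : ℕ, ζ^k / (Nat.factorial k : ℝ) = Real.exp ζ := by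
    rw [Real.exp_eq_exp_ℝ, NormedSpace.exp_eq_tsum_div]
  rw [this, ← Real.exp_add]
  simp

end PertAux

namespace PertAux

lemma sum_cons {N k : ℕ} (F : (Fin (k+1) → Fin N × Fin N) → ℝ) :
    ∑ e' : Fin (k+1) → Fin N × Fin N, F e'
      = ∑ p : Fin N × Fin N, ∑ e : Fin k → Fin N × Fin N, F (Fin.cons p e) := by
  rw [← Equiv.sum_comp (Fin.consEquiv fun _ => Fin N × Fin N) F, Fintype.sum_prod_type]
  rfl

lemma ham_cons {N k : ℕ} (p : Fin N × Fin N) (e : Fin k → Fin N × Fin N)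
    (σ : Fin N → Bool) :
    ham N (k+1) (Fin.cons p e) σ
      = -(spin (σ p.1) * spin (σ p.2)) + ham N k e σ := by
  rw [ham, ham, Fin.sum_univ_succ]
  simp [Fin.cons_zero, Fin.cons_succ]
  ring

lemma sum_spin_pairs (N : ℕ) (hN : 1 ≤ N) (σ : Fin N → Bool) :
    ∑ p : Fin N × Fin N, spin (σ p.1) * spin (σ p.2) = (N:ℝ)^2 * (mag N σ)^2 := by
  have hNne : ((N:ℝ)) ≠ 0 := by positivity
  rw [Fintype.sum_prod_type]
  have : ∑ i : Fin N, ∑ j : Fin N, spin (σ i) * spin (σ j)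
      = (∑ i : Fin N, spin (σ i)) * (∑ j : Fin N, spin (σ j)) := by
    rw [Finset.sum_mul]
    apply Finset.sum_congr rfl
    intro i _
    rw [Finset.mul_sum]
  rw [this, mag]
  field_simp

lemma bfun_succ_le (N k : ℕ) (hN : 1 ≤ N) (β lam : ℝ) (hβ : 0 ≤ β) :
    bfun N (k+1) β lam
      ≤ Real.log (Real.cosh β) + bfun N k β lam + Real.tanh β * cfun N k β lam := by
  set t := Real.tanh β with ht
  have ht0 : 0 ≤ t := tanh_nonneg hβ
  have ht1 : t < 1 := tanh_lt_one β
  -- the spin product attached to the extra edge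
  set Sp : (Fin N × Fin N) → (Fin k → Fin N × Fin N) → ℝ := fun p e =>
    ∑ σ : Fin N → Bool,
      Real.exp (-β * ham N k e σ + lam * N * (mag N σ) ^ 2 / 2)
        * (spin (σ p.1) * spin (σ p.2)) with hSp
  -- pointwise: log Zp_{k+1} (cons p e) ≤ log cosh β + log Zp_k e + t * (Sp p e / Zp e)
  have key : ∀ (p : Fin N × Fin N) (e : Fin k → Fin N × Fin N),
      Real.log (Zp N (k+1) β lam (Fin.cons p e))
        ≤ Real.log (Real.cosh β) + Real.log (Zp N k β lam e)
          + t * (Sp p e / Zp N k β lam e) := by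
    intro p e
    have hZpos := Zp_pos N k β lam e
    have hZcons : Zp N (k+1) β lam (Fin.cons p e)
        = Real.cosh β * (Zp N k β lam e + t * Sp p e) := by
      rw [Zp]
      have hterm : ∀ σ : Fin N → Bool,
          Real.exp (-β * ham N (k+1) (Fin.cons p e) σ + lam * N * (mag N σ) ^ 2 / 2)
          = Real.cosh β *
            (Real.exp (-β * ham N k e σ + lam * N * (mag N σ) ^ 2 / 2)
              + t * (Real.exp (-β * ham N k e σ + lam * N * (mag N σ) ^ 2 / 2)
                  * (spin (σ p.1) * spin (σ p.2)))) := by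
        intro σ
        rw [ham_cons]
        have hs : spin (σ p.1) * spin (σ p.2) = 1 ∨ spin (σ p.1) * spin (σ p.2) = -1 := by
          rcases spin_cases (σ p.1) with h1 | h1 <;> rcases spin_cases (σ p.2) with h2 | h2 <;>
            rw [h1, h2] <;> norm_num
        have hexpand : -β * (-(spin (σ p.1) * spin (σ p.2)) + ham N k e σ)
              + lam * N * (mag N σ) ^ 2 / 2
            = (-β * ham N k e σ + lam * N * (mag N σ) ^ 2 / 2)
              + β * (spin (σ p.1) * spin (σ p.2)) := by ring
        rw [hexpand, Real.exp_add, exp_beta_spin β _ hs]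
        ring
      calc ∑ σ : Fin N → Bool,
            Real.exp (-β * ham N (k+1) (Fin.cons p e) σ + lam * N * (mag N σ) ^ 2 / 2)
          = ∑ σ : Fin N → Bool, Real.cosh β *
            (Real.exp (-β * ham N k e σ + lam * N * (mag N σ) ^ 2 / 2)
              + t * (Real.exp (-β * ham N k e σ + lam * N * (mag N σ) ^ 2 / 2)
                  * (spin (σ p.1) * spin (σ p.2)))) :=
            Finset.sum_congr rfl (fun σ _ => hterm σ)
        _ = Real.cosh β * (Zp N k β lam e + t * Sp p e) := by
            rw [← Finset.mul_sum, Finset.sum_add_distrib, ← Finset.mul_sum, Zp, hSp]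
    -- |Sp| ≤ Zp
    have habsSp : |Sp p e| ≤ Zp N k β lam e := by
      rw [hSp, Zp]
      refine le_trans (Finset.abs_sum_le_sum_abs _ _) ?_
      apply Finset.sum_le_sum
      intro σ _
      rw [abs_mul, Real.abs_exp, abs_mul, abs_spin, abs_spin]
      simp
    have hΩ : |Sp p e / Zp N k β lam e| ≤ 1 := by
      rw [abs_div, abs_of_pos hZpos, div_le_one hZpos]
      exact habsSp
    have hpos1 : 0 < 1 + t * (Sp p e / Zp N k β lam e) := by
      have : |t * (Sp p e / Zp N k β lam e)| < 1 := by
        rw [abs_mul, abs_of_nonneg ht0]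
        calc t * |Sp p e / Zp N k β lam e| ≤ t * 1 :=
              mul_le_mul_of_nonneg_left hΩ ht0
          _ < 1 := by linarith
      have := abs_lt.1 this
      linarith
    have hZcons' : Zp N (k+1) β lam (Fin.cons p e)
        = Real.cosh β * Zp N k β lam e * (1 + t * (Sp p e / Zp N k β lam e)) := by
      rw [hZcons]
      field_simp
    rw [hZcons', Real.log_mul (by positivity) hpos1.ne',
      Real.log_mul (Real.cosh_pos β).ne' hZpos.ne']
    have hlog := Real.log_le_sub_one_of_pos hpos1
    linarith
  -- now average
  have hNpos : (0:ℝ) < (N:ℝ) := by exact_mod_cast hN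
  have hP : (0:ℝ) < (N:ℝ)^(2*k) := by positivity
  have hQ : (0:ℝ) < (N:ℝ)^2 := by positivity
  have hcardX : ((Fintype.card (Fin N × Fin N) : ℝ)) = (N:ℝ)^2 := by
    simp [Fintype.card_prod]
    ring
  -- Σ_p Sp p e = N² * (numerator of Om2)
  have hSpSum : ∀ e : Fin k → Fin N × Fin N,
      ∑ p : Fin N × Fin N, Sp p e / Zp N k β lam e = (N:ℝ)^2 * Om2 N k β lam e := by
    intro e
    rw [← Finset.sum_div]
    have : ∑ p : Fin N × Fin N, Sp p e
        = (N:ℝ)^2 * ∑ σ : Fin N → Bool,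
            Real.exp (-β * ham N k e σ + lam * N * (mag N σ) ^ 2 / 2) * (mag N σ)^2 := by
      rw [hSp, Finset.sum_comm, Finset.mul_sum]
      apply Finset.sum_congr rfl
      intro σ _
      rw [← Finset.mul_sum, sum_spin_pairs N hN σ]
      ring
    rw [this, Om2]
    ring
  -- expand bfun (k+1)
  have hpow : (N:ℝ)^(2*(k+1)) = (N:ℝ)^(2*k) * (N:ℝ)^2 := by
    rw [← pow_add]
    ring_nf
  rw [bfun, sum_cons (fun e' => Real.log (Zp N (k+1) β lam e')), hpow]
  rw [div_le_iff₀ (by positivity)]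
  calc ∑ p : Fin N × Fin N, ∑ e : Fin k → Fin N × Fin N,
        Real.log (Zp N (k+1) β lam (Fin.cons p e))
      ≤ ∑ p : Fin N × Fin N, ∑ e : Fin k → Fin N × Fin N,
          (Real.log (Real.cosh β) + Real.log (Zp N k β lam e)
            + t * (Sp p e / Zp N k β lam e)) := by
        apply Finset.sum_le_sum; intro p _
        apply Finset.sum_le_sum; intro e _
        exact key p e
    _ = (N:ℝ)^2 * (N:ℝ)^(2*k) * Real.log (Real.cosh β)
        + (N:ℝ)^2 * (∑ e : Fin k → Fin N × Fin N, Real.log (Zp N k β lam e))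
        + t * (N:ℝ)^2 * (∑ e : Fin k → Fin N × Fin N, Om2 N k β lam e) := by
        have h2 : ∑ p : Fin N × Fin N, ∑ e : Fin k → Fin N × Fin N,
            t * (Sp p e / Zp N k β lam e)
            = t * (N:ℝ)^2 * (∑ e : Fin k → Fin N × Fin N, Om2 N k β lam e) := by
          rw [Finset.sum_comm]
          have : ∀ e : Fin k → Fin N × Fin N,
              ∑ p : Fin N × Fin N, t * (Sp p e / Zp N k β lam e)
              = t * ((N:ℝ)^2 * Om2 N k β lam e) := by
            intro e
            rw [← Finset.mul_sum, hSpSum e]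
          rw [Finset.sum_congr rfl (fun e _ => this e), ← Finset.mul_sum, ← Finset.mul_sum]
          ring
        simp only [Finset.sum_add_distrib]
        rw [h2]
        simp only [Finset.sum_const, Finset.card_univ, nsmul_eq_mul, Fintype.card_prod,
          Fintype.card_fin, Fintype.card_fun]
        push_cast
        rw [pow_mul]
        ring
    _ ≤ (Real.log (Real.cosh β) + bfun N k β lam + t * cfun N k β lam)
          * ((N:ℝ)^(2*k) * (N:ℝ)^2) := by
        apply le_of_eq
        rw [bfun, cfun]
        field_simp


end PertAux

namespace PertAux

lemma abs_tanh_le_one (β : ℝ) : |Real.tanh β| ≤ 1 := by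
  rw [Real.tanh_eq_sinh_div_cosh, abs_div, abs_of_pos (Real.cosh_pos β),
    div_le_one (Real.cosh_pos β), abs_le]
  constructor
  · have := Real.cosh_add_sinh β
    have := Real.exp_pos β
    linarith
  · have := Real.cosh_sub_sinh β
    have := Real.exp_pos (-β)
    linarith

/-- The `k`-th term of the pressure series along the line. -/
def Fterm (N : ℕ) (β lam₀ : ℝ) (k : ℕ) (a : ℝ) : ℝ :=
  poissonWeight (a * N) k * bfun N k β (lam₀ - 2 * a * Real.tanh β)

/-- Its derivative in `a`. -/
def Fterm' (N : ℕ) (β lam₀ : ℝ) (k : ℕ) (a : ℝ) : ℝ :=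
  pwd (a * N) k * N * bfun N k β (lam₀ - 2 * a * Real.tanh β)
    + poissonWeight (a * N) k
        * (-(N * Real.tanh β * cfun N k β (lam₀ - 2 * a * Real.tanh β)))

lemma hasDerivAt_Fterm (N : ℕ) (β lam₀ : ℝ) (k : ℕ) (a : ℝ) :
    HasDerivAt (Fterm N β lam₀ k) (Fterm' N β lam₀ k a) a := by
  have h1 : HasDerivAt (fun a : ℝ => poissonWeight (a * N) k) (pwd (a * N) k * N) a := by
    have hin : HasDerivAt (fun a : ℝ => a * (N:ℝ)) (1 * (N:ℝ)) a :=
      (hasDerivAt_id a).mul_const (N:ℝ)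
    have := (hasDerivAt_poissonWeight (a * (N:ℝ)) k).comp a hin
    exact this.congr_deriv (by ring)
  have h2 := hasDerivAt_bfun_line N k β lam₀ a
  have := h1.mul h2
  exact this

lemma abs_bfun_line_le (N : ℕ) (hN : 1 ≤ N) (β lam₀ : ℝ) (hβ : 0 ≤ β)
    {R a : ℝ} (ha : |a| ≤ R) (k : ℕ) :
    |bfun N k β (lam₀ - 2 * a * Real.tanh β)|
      ≤ (N * Real.log 2 + (|lam₀| + 2 * R) * N / 2) + β * k := by
  have hR : 0 ≤ R := le_trans (abs_nonneg a) ha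
  have hlam : |lam₀ - 2 * a * Real.tanh β| ≤ |lam₀| + 2 * R := by
    refine le_trans (abs_sub _ _) ?_
    have : |2 * a * Real.tanh β| ≤ 2 * R := by
      rw [abs_mul, abs_mul, abs_two]
      calc 2 * |a| * |Real.tanh β| ≤ 2 * R * 1 := by
            apply mul_le_mul (by linarith) (abs_tanh_le_one β) (abs_nonneg _) (by linarith)
        _ = 2 * R := by ring
    linarith
  have := abs_bfun_le N k hN β (lam₀ - 2 * a * Real.tanh β) hβ
  have hmono : |lam₀ - 2 * a * Real.tanh β| * (N:ℝ) / 2 ≤ (|lam₀| + 2 * R) * N / 2 := by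
    gcongr
  linarith

/-- Uniform bound for the derivative terms. -/
def ubound (N : ℕ) (β lam₀ R : ℝ) (k : ℕ) : ℝ :=
  (qbs (R * N) k + qb (R * N) k)
      * ((N * Real.log 2 + (|lam₀| + 2 * R) * N / 2) + β * k) * N
    + qb (R * N) k * N

lemma summable_ubound (N : ℕ) (β lam₀ R : ℝ) : Summable (ubound N β lam₀ R) := by
  set C := (N * Real.log 2 + (|lam₀| + 2 * R) * N / 2) with hC
  have h1 := (summable_qbs_linear (R * N) C β).add (summable_qb_linear (R * N) C β)
  have h2 := h1.mul_right (N:ℝ)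
  have h3 := (summable_qb (R * N)).mul_right (N:ℝ)
  apply Summable.congr (h2.add h3)
  intro k
  simp only [ubound]
  ring

lemma abs_Fterm'_le (N : ℕ) (hN : 1 ≤ N) (β lam₀ : ℝ) (hβ : 0 ≤ β)
    {R a : ℝ} (ha : |a| ≤ R) (k : ℕ) :
    |Fterm' N β lam₀ k a| ≤ ubound N β lam₀ R k := by
  have hR : 0 ≤ R := le_trans (abs_nonneg a) ha
  have haN : |a * (N:ℝ)| ≤ R * N := by
    rw [abs_mul, Nat.abs_cast]
    exact mul_le_mul_of_nonneg_right ha (Nat.cast_nonneg N)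
  set lam := lam₀ - 2 * a * Real.tanh β with hlam
  have hb := abs_bfun_line_le N hN β lam₀ hβ ha k
  have hbnn : (0:ℝ) ≤ (N * Real.log 2 + (|lam₀| + 2 * R) * N / 2) + β * k := by
    refine le_trans (abs_nonneg _) hb
  have h1 : |pwd (a * N) k * N * bfun N k β lam|
      ≤ (qbs (R * N) k + qb (R * N) k)
          * ((N * Real.log 2 + (|lam₀| + 2 * R) * N / 2) + β * k) * N := by
    rw [abs_mul, abs_mul, Nat.abs_cast]
    have hpwd := abs_pwd_le haN k
    have hpwdnn : (0:ℝ) ≤ |pwd (a * N) k| := abs_nonneg _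
    calc |pwd (a * N) k| * (N:ℝ) * |bfun N k β lam|
        = (|pwd (a * N) k| * |bfun N k β lam|) * N := by ring
      _ ≤ ((qbs (R * N) k + qb (R * N) k)
            * ((N * Real.log 2 + (|lam₀| + 2 * R) * N / 2) + β * k)) * N := by
          apply mul_le_mul_of_nonneg_right _ (Nat.cast_nonneg N)
          exact mul_le_mul hpwd hb (abs_nonneg _) (le_trans hpwdnn hpwd)
      _ = _ := by ring
  have h2 : |poissonWeight (a * N) k * (-(N * Real.tanh β * cfun N k β lam))|
      ≤ qb (R * N) k * N := by
    rw [abs_mul, abs_neg, abs_mul, abs_mul, Nat.abs_cast]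
    have hc : |cfun N k β lam| ≤ 1 := by
      rw [abs_of_nonneg (cfun_nonneg N k β lam)]
      exact cfun_le_one N k hN β lam
    have hpw := abs_poissonWeight_le haN k
    calc |poissonWeight (a * N) k| * ((N:ℝ) * |Real.tanh β| * |cfun N k β lam|)
        ≤ qb (R * N) k * ((N:ℝ) * 1 * 1) := by
          apply mul_le_mul hpw _ (by positivity) (qb_nonneg (by positivity) k)
          apply mul_le_mul _ hc (abs_nonneg _) (by positivity)
          exact mul_le_mul_of_nonneg_left (abs_tanh_le_one β) (Nat.cast_nonneg N)
      _ = qb (R * N) k * N := by ring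
  calc |Fterm' N β lam₀ k a| ≤ _ + _ := abs_add_le _ _
    _ ≤ ubound N β lam₀ R k := add_le_add h1 h2

lemma summable_Fterm (N : ℕ) (hN : 1 ≤ N) (β lam₀ : ℝ) (hβ : 0 ≤ β)
    {R a : ℝ} (ha : |a| ≤ R) :
    Summable (fun k => Fterm N β lam₀ k a) := by
  have hR : 0 ≤ R := le_trans (abs_nonneg a) ha
  apply Summable.of_norm_bounded
    (g := fun k => qb (R * N) k * ((N * Real.log 2 + (|lam₀| + 2 * R) * N / 2) + β * k))
    (summable_qb_linear (R * N) _ β)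
  intro k
  rw [Real.norm_eq_abs, Fterm, abs_mul]
  have haN : |a * (N:ℝ)| ≤ R * N := by
    rw [abs_mul, Nat.abs_cast]
    exact mul_le_mul_of_nonneg_right ha (Nat.cast_nonneg N)
  exact mul_le_mul (abs_poissonWeight_le haN k) (abs_bfun_line_le N hN β lam₀ hβ ha k)
    (abs_nonneg _) (qb_nonneg (by positivity) k)

lemma hasDerivAt_pressure (N : ℕ) (hN : 1 ≤ N) (β lam₀ : ℝ) (hβ : 0 ≤ β)
    {R a : ℝ} (ha : a ∈ Set.Ioo (-R) R) :
    HasDerivAt (fun a : ℝ => pertPressure N a β (lam₀ - 2 * a * Real.tanh β))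
      ((∑' k : ℕ, Fterm' N β lam₀ k a) / N) a := by
  have habs : ∀ y ∈ Set.Ioo (-R) R, |y| ≤ R := by
    intro y hy
    rw [abs_le]
    exact ⟨hy.1.le, hy.2.le⟩
  have h : HasDerivAt (fun z : ℝ => ∑' k : ℕ, Fterm N β lam₀ k z)
      (∑' k : ℕ, Fterm' N β lam₀ k a) a := by
    apply hasDerivAt_tsum_of_isPreconnected (summable_ubound N β lam₀ R) isOpen_Ioo
      (convex_Ioo (-R) R).isPreconnected
      (fun k y _ => hasDerivAt_Fterm N β lam₀ k y)
      (fun k y hy => by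
        rw [Real.norm_eq_abs]
        exact abs_Fterm'_le N hN β lam₀ hβ (habs y hy) k)
      ha (summable_Fterm N hN β lam₀ hβ (habs a ha)) ha
  exact h.div_const (N:ℝ)

end PertAux

namespace PertAux

lemma tsum_Fterm'_le (N : ℕ) (hN : 1 ≤ N) (β lam₀ : ℝ) (hβ : 0 ≤ β)
    {a : ℝ} (ha : 0 ≤ a) :
    (∑' k : ℕ, Fterm' N β lam₀ k a) / N ≤ Real.log (Real.cosh β) := by
  set t := Real.tanh β with htdef
  set lam := lam₀ - 2 * a * t with hlamdef
  set ζ := a * (N:ℝ) with hζdef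
  have hζ0 : 0 ≤ ζ := by positivity
  have haR : |a| ≤ a := by rw [abs_of_nonneg ha]
  have haN : |ζ| ≤ a * N := by rw [abs_of_nonneg hζ0]
  set w : ℕ → ℝ := fun k => poissonWeight ζ k with hwdef
  set b : ℕ → ℝ := fun k => bfun N k β lam with hbdef
  set c : ℕ → ℝ := fun k => cfun N k β lam with hcdef
  have hw0 : ∀ k, 0 ≤ w k := fun k => poissonWeight_nonneg hζ0 k
  set C := (N * Real.log 2 + (|lam₀| + 2 * a) * N / 2) with hCdef
  have hbbd : ∀ k, |b k| ≤ C + β * k := fun k => abs_bfun_line_le N hN β lam₀ hβ haR k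
  have hwbd : ∀ k, |w k| ≤ qb (a * N) k := fun k => abs_poissonWeight_le haN k
  have hqnn : ∀ k, 0 ≤ qb (a * N) k := qb_nonneg (by positivity)
  -- summabilities
  have hSb : Summable (fun k => w k * b k) := by
    apply Summable.of_norm_bounded (g := fun k => qb (a * N) k * (C + β * k))
      (summable_qb_linear (a * N) C β)
    intro k
    rw [Real.norm_eq_abs, abs_mul]
    exact mul_le_mul (hwbd k) (hbbd k) (abs_nonneg _) (hqnn k)
  have hSb1 : Summable (fun k => w k * b (k + 1)) := by
    apply Summable.of_norm_bounded (g := fun k => qb (a * N) k * ((C + β) + β * k))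
      (summable_qb_linear (a * N) (C + β) β)
    intro k
    rw [Real.norm_eq_abs, abs_mul]
    have : |b (k+1)| ≤ (C + β) + β * k := by
      have := hbbd (k+1)
      push_cast at this
      linarith
    exact mul_le_mul (hwbd k) this (abs_nonneg _) (hqnn k)
  have hSc : Summable (fun k => w k * c k) := by
    apply Summable.of_norm_bounded (g := fun k => qb (a * N) k * (1 + 0 * k))
      (summable_qb_linear (a * N) 1 0)
    intro k
    rw [Real.norm_eq_abs, abs_mul]
    have hc : |c k| ≤ 1 := by
      rw [hcdef, abs_of_nonneg (cfun_nonneg N k β lam)]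
      exact cfun_le_one N k hN β lam
    calc |w k| * |c k| ≤ qb (a * N) k * 1 :=
          mul_le_mul (hwbd k) hc (abs_nonneg _) (hqnn k)
      _ = qb (a * N) k * (1 + 0 * k) := by ring
  have hSw : Summable w := by
    apply Summable.of_norm_bounded (g := qb (a * N)) (summable_qb (a * N))
    intro k
    rw [Real.norm_eq_abs]
    exact hwbd k
  -- the shifted sequence
  set s : ℕ → ℝ := fun k => match k with | 0 => 0 | (k+1) => w k * b (k+1) with hsdef
  have hSs : Summable s := by
    rw [← summable_nat_add_iff 1]
    exact hSb1
  have hGs : ∀ k, pwd ζ k * b k = s k - w k * b k := by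
    intro k
    cases k with
    | zero => simp [hsdef, pwd, hwdef]
    | succ n => simp only [hsdef, pwd, hwdef]; ring
  -- rewrite the total sum
  have hsplit : ∀ k, Fterm' N β lam₀ k a
      = (N:ℝ) * (s k - w k * b k) + (-((N:ℝ) * t)) * (w k * c k) := by
    intro k
    rw [Fterm']
    rw [← hlamdef, ← hζdef]
    rw [← hGs k]
    simp only [← hwdef, ← hbdef, ← hcdef]
    ring
  have hStotal1 : Summable (fun k => (N:ℝ) * (s k - w k * b k)) :=
    ((hSs.sub hSb).mul_left _)
  have hStotal2 : Summable (fun k => (-((N:ℝ) * t)) * (w k * c k)) := hSc.mul_left _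
  have htsum : ∑' k : ℕ, Fterm' N β lam₀ k a
      = (N:ℝ) * (∑' k, (s k - w k * b k)) + (-((N:ℝ) * t)) * ∑' k, (w k * c k) := by
    rw [tsum_congr hsplit, Summable.tsum_add hStotal1 hStotal2, tsum_mul_left, tsum_mul_left]
  -- shift identity
  have hshift : ∑' k, s k = ∑' k, w k * b (k + 1) := by
    rw [Summable.tsum_eq_zero_add hSs]
    simp [hsdef]
  have hsub : ∑' k, (s k - w k * b k) = ∑' k, (w k * b (k+1) - w k * b k) := by
    rw [Summable.tsum_sub hSs hSb, hshift, ← Summable.tsum_sub hSb1 hSb]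
  -- final comparison
  have hcomb : Summable (fun k => (w k * b (k+1) - w k * b k) - t * (w k * c k)) :=
    (hSb1.sub hSb).sub (hSc.mul_left t)
  have hfinal : ∑' k : ℕ, Fterm' N β lam₀ k a
      = (N:ℝ) * ∑' k, ((w k * b (k+1) - w k * b k) - t * (w k * c k)) := by
    rw [htsum, hsub, Summable.tsum_sub (hSb1.sub hSb) (hSc.mul_left t), tsum_mul_left]
    ring
  have hle : ∑' k, ((w k * b (k+1) - w k * b k) - t * (w k * c k))
      ≤ ∑' k, w k * Real.log (Real.cosh β) := by
    apply Summable.tsum_le_tsum _ hcomb (hSw.mul_right _)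
    intro k
    have hk := bfun_succ_le N k hN β lam hβ
    have : b (k+1) - b k - t * c k ≤ Real.log (Real.cosh β) := by
      simp only [hbdef, hcdef]
      linarith
    calc (w k * b (k+1) - w k * b k) - t * (w k * c k)
        = w k * (b (k+1) - b k - t * c k) := by ring
      _ ≤ w k * Real.log (Real.cosh β) := mul_le_mul_of_nonneg_left this (hw0 k)
  have hsum1 : ∑' k, w k * Real.log (Real.cosh β) = Real.log (Real.cosh β) := by
    rw [tsum_mul_right, hwdef]
    rw [tsum_poissonWeight ζ]
    ring
  have hNpos : (0:ℝ) < N := by exact_mod_cast hN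
  rw [div_le_iff₀ hNpos, hfinal]
  calc (N:ℝ) * ∑' k, ((w k * b (k+1) - w k * b k) - t * (w k * c k))
      ≤ (N:ℝ) * ∑' k, w k * Real.log (Real.cosh β) :=
        mul_le_mul_of_nonneg_left hle (Nat.cast_nonneg N)
    _ = Real.log (Real.cosh β) * N := by rw [hsum1]; ring

end PertAux

/-- Fix `0 < λ₀ < 1` and, for `α` with `2 α tanh β ≤ λ₀`, set
`λ(α) = λ₀ − 2 α tanh β ≥ 0`. Then the function `α ↦ Ā_N(λ(α))` satisfies
`d/dα [Ā_N(λ(α))] ≤ ln cosh β`, and hence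
`Ā_N(λ(α)) ≤ Ā_N(λ₀)|_{α=0} + α ln cosh β`. -/
theorem pertPressure_along_line
    (N : ℕ) (hN : 1 ≤ N) (β : ℝ) (hβ : 0 ≤ β)
    (lam₀ : ℝ) (h0 : 0 < lam₀) (h1 : lam₀ < 1) :
    (∀ α d : ℝ, 0 ≤ α → 2 * α * Real.tanh β ≤ lam₀ →
      HasDerivAt (fun a : ℝ => pertPressure N a β (lam₀ - 2 * a * Real.tanh β)) d α →
      d ≤ Real.log (Real.cosh β))
    ∧ (∀ α : ℝ, 0 ≤ α → 2 * α * Real.tanh β ≤ lam₀ →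
        pertPressure N α β (lam₀ - 2 * α * Real.tanh β)
          ≤ pertPressure N 0 β lam₀ + α * Real.log (Real.cosh β)) := by
  constructor
  · intro α d hα _ hderiv
    have hmem : α ∈ Set.Ioo (-(α+1)) (α+1) := ⟨by linarith, by linarith⟩
    have h := PertAux.hasDerivAt_pressure N hN β lam₀ hβ hmem
    have hd : d = (∑' k : ℕ, PertAux.Fterm' N β lam₀ k α) / N := hderiv.unique h
    rw [hd]
    exact PertAux.tsum_Fterm'_le N hN β lam₀ hβ hα
  · intro α hα _
    set L := Real.log (Real.cosh β) with hL
    set f : ℝ → ℝ := fun a => pertPressure N a β (lam₀ - 2 * a * Real.tanh β) with hf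
    set F : ℝ → ℝ := fun a => f a - a * L with hF
    have hDf : ∀ x ∈ Set.Icc (0:ℝ) α, HasDerivAt f
        ((∑' k : ℕ, PertAux.Fterm' N β lam₀ k x) / N) x := by
      intro x hx
      have hmem : x ∈ Set.Ioo (-(α+1)) (α+1) := ⟨by
          have := hx.1; linarith, by have := hx.2; linarith⟩
      exact PertAux.hasDerivAt_pressure N hN β lam₀ hβ hmem
    have hDF : ∀ x ∈ Set.Icc (0:ℝ) α, HasDerivAt F
        ((∑' k : ℕ, PertAux.Fterm' N β lam₀ k x) / N - L) x := by
      intro x hx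
      have h1' : HasDerivAt (fun a : ℝ => a * L) L x := by
        simpa using (hasDerivAt_id x).mul_const L
      exact (hDf x hx).sub h1'
    have hanti : AntitoneOn F (Set.Icc 0 α) := by
      apply antitoneOn_of_deriv_nonpos (convex_Icc 0 α)
      · intro x hx
        exact ((hDF x hx).continuousAt).continuousWithinAt
      · intro x hx
        rw [interior_Icc] at hx
        exact ((hDF x (Set.mem_Icc_of_Ioo hx)).differentiableAt).differentiableWithinAt
      · intro x hx
        rw [interior_Icc] at hx
        rw [(hDF x (Set.mem_Icc_of_Ioo hx)).deriv]
        have := PertAux.tsum_Fterm'_le N hN β lam₀ hβ (le_of_lt hx.1)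
        linarith
    have h0mem : (0:ℝ) ∈ Set.Icc (0:ℝ) α := ⟨le_refl 0, hα⟩
    have hαmem : α ∈ Set.Icc (0:ℝ) α := ⟨hα, le_refl α⟩
    have := hanti h0mem hαmem hα
    have hF0 : F 0 = pertPressure N 0 β lam₀ := by
      simp only [hF, hf]
      norm_num
    have hFα : F α = pertPressure N α β (lam₀ - 2 * α * Real.tanh β) - α * L := rfl
    rw [hF0, hFα] at this
    linarith
end
end

section
/- For every 0 < λ₀ < 1 and every N ≥ 1, the Curie–Weiss pressure at inverse temperature λ₀ satisfies the finite-size bound (1/N) ln Σ_{σ ∈ {−1,+1}^N} exp(λ₀ N m(σ)²/2) ≤ ln 2 + (1/N)·(½ ln(1/(1−λ₀)) + 1); in particular it equals ln 2 + O(1/N). -/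
open Finset

noncomputable section

lemma gauss_lin_eq (b a : ℝ) (hb : 0 < b) :
    ∀ x : ℝ, -b * x ^ 2 + a * x = a ^ 2 / (4 * b) + -b * (x - a / (2 * b)) ^ 2 := by
  intro x
  field_simp
  ring

lemma integrable_gauss_lin (b a : ℝ) (hb : 0 < b) :
    MeasureTheory.Integrable (fun x : ℝ => Real.exp (-b * x ^ 2 + a * x)) := by
  simp_rw [gauss_lin_eq b a hb, Real.exp_add]
  exact ((integrable_exp_neg_mul_sq hb).comp_sub_right (a / (2 * b))).const_mul _

lemma integral_gauss_lin (b a : ℝ) (hb : 0 < b) :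
    ∫ x : ℝ, Real.exp (-b * x ^ 2 + a * x)
      = Real.sqrt (Real.pi / b) * Real.exp (a ^ 2 / (4 * b)) := by
  simp_rw [gauss_lin_eq b a hb, Real.exp_add]
  rw [MeasureTheory.integral_const_mul]
  rw [MeasureTheory.integral_sub_right_eq_self
    (fun y : ℝ => Real.exp (-b * y ^ 2)) (a / (2 * b))]
  rw [integral_gaussian]
  ring

/-- For every `0 < λ₀ < 1` and every `N ≥ 1`, the Curie–Weiss pressure
at inverse temperature `λ₀` satisfies the finite-size bound
`(1/N) ln ∑_σ exp(λ₀ N m(σ)²/2) ≤ ln 2 + (1/N)(½ ln(1/(1−λ₀)) + 1)`;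
in particular it equals `ln 2 + O(1/N)`. -/
theorem curieWeiss_pressure_finite_size_bound
    (N : ℕ) (hN : 1 ≤ N) (lam₀ : ℝ) (h0 : 0 < lam₀) (h1 : lam₀ < 1) :
    (Real.log (∑ σ : Fin N → Bool, Real.exp (lam₀ * N * (mag N σ) ^ 2 / 2))) / N
      ≤ Real.log 2 + (1 / N) * (Real.log (1 / (1 - lam₀)) / 2 + 1) := by
  have hNpos : (0 : ℝ) < N := by exact_mod_cast hN
  have h1l : (0 : ℝ) < 1 - lam₀ := by linarith
  set S : (Fin N → Bool) → ℝ := fun σ => ∑ i : Fin N, spin (σ i) with hS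
  set b : ℝ := lam₀ * N / 2 with hbdef
  have hb : 0 < b := by positivity
  set c : ℝ := lam₀ * (1 - lam₀) * N / 2 with hcdef
  have hc : 0 < c := by positivity
  have hsqrtb : (0 : ℝ) < Real.sqrt (Real.pi / b) :=
    Real.sqrt_pos.mpr (by positivity)
  -- Hubbard–Stratonovich representation of each term
  have hrep : ∀ σ : Fin N → Bool,
      Real.exp (lam₀ * N * (mag N σ) ^ 2 / 2)
        = (Real.sqrt (Real.pi / b))⁻¹
            * ∫ t : ℝ, Real.exp (-b * t ^ 2 + (lam₀ * S σ) * t) := by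
    intro σ
    rw [integral_gauss_lin b _ hb]
    rw [← mul_assoc, inv_mul_cancel₀ (ne_of_gt hsqrtb), one_mul]
    congr 1
    have : mag N σ = S σ / N := rfl
    rw [this, hbdef]
    field_simp
    ring
  -- the key upper bound on the partition function
  have hkey : (∑ σ : Fin N → Bool, Real.exp (lam₀ * N * (mag N σ) ^ 2 / 2))
      ≤ 2 ^ N * Real.sqrt (1 / (1 - lam₀)) := by
    have hsum : (∑ σ : Fin N → Bool, Real.exp (lam₀ * N * (mag N σ) ^ 2 / 2))
        = (Real.sqrt (Real.pi / b))⁻¹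
            * ∫ t : ℝ, ∑ σ : Fin N → Bool, Real.exp (-b * t ^ 2 + (lam₀ * S σ) * t) := by
      rw [MeasureTheory.integral_finset_sum _
        (fun σ _ => integrable_gauss_lin b (lam₀ * S σ) hb)]
      rw [Finset.mul_sum]
      exact Finset.sum_congr rfl fun σ _ => hrep σ
    rw [hsum]
    have hptwise : ∀ t : ℝ,
        (∑ σ : Fin N → Bool, Real.exp (-b * t ^ 2 + (lam₀ * S σ) * t))
          ≤ 2 ^ N * Real.exp (-c * t ^ 2) := by
      intro t
      have hfactor : ∀ σ : Fin N → Bool,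
          Real.exp (-b * t ^ 2 + (lam₀ * S σ) * t)
            = Real.exp (-b * t ^ 2) * ∏ i : Fin N, Real.exp (lam₀ * spin (σ i) * t) := by
        intro σ
        rw [← Real.exp_sum, ← Real.exp_add]
        congr 1
        rw [hS]
        simp only [Finset.sum_mul, Finset.mul_sum]
      simp_rw [hfactor, ← Finset.mul_sum]
      have hswap : (∑ σ : Fin N → Bool, ∏ i : Fin N, Real.exp (lam₀ * spin (σ i) * t))
          = (Real.exp (lam₀ * t) + Real.exp (-(lam₀ * t))) ^ N := by
        have := Finset.prod_univ_sum (t := fun _ : Fin N => (Finset.univ : Finset Bool))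
          (f := fun _ y => Real.exp (lam₀ * spin y * t))
        rw [Fintype.piFinset_univ] at this
        rw [← this]
        have hbool : (∑ y : Bool, Real.exp (lam₀ * spin y * t))
            = Real.exp (lam₀ * t) + Real.exp (-(lam₀ * t)) := by
          simp [spin]
        rw [Finset.prod_congr rfl fun i _ => hbool, Finset.prod_const, Finset.card_univ,
          Fintype.card_fin]
      rw [hswap]
      have hcosh : Real.exp (lam₀ * t) + Real.exp (-(lam₀ * t))
          ≤ 2 * Real.exp ((lam₀ * t) ^ 2 / 2) := by
        have := Real.cosh_le_exp_half_sq (lam₀ * t)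
        rw [Real.cosh_eq] at this
        linarith
      have hpow : (Real.exp (lam₀ * t) + Real.exp (-(lam₀ * t))) ^ N
          ≤ (2 * Real.exp ((lam₀ * t) ^ 2 / 2)) ^ N := by
        apply pow_le_pow_left₀ (by positivity) hcosh
      calc Real.exp (-b * t ^ 2) * (Real.exp (lam₀ * t) + Real.exp (-(lam₀ * t))) ^ N
          ≤ Real.exp (-b * t ^ 2) * (2 * Real.exp ((lam₀ * t) ^ 2 / 2)) ^ N := by
            exact mul_le_mul_of_nonneg_left hpow (le_of_lt (Real.exp_pos _))
        _ = 2 ^ N * Real.exp (-c * t ^ 2) := by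
            rw [mul_pow, ← Real.exp_nat_mul, mul_left_comm, ← Real.exp_add]
            congr 2
            rw [hbdef, hcdef]
            push_cast
            ring
    have hintle : (∫ t : ℝ, ∑ σ : Fin N → Bool, Real.exp (-b * t ^ 2 + (lam₀ * S σ) * t))
        ≤ ∫ t : ℝ, 2 ^ N * Real.exp (-c * t ^ 2) := by
      apply MeasureTheory.integral_mono
      · exact MeasureTheory.integrable_finset_sum _
          (fun σ _ => integrable_gauss_lin b (lam₀ * S σ) hb)
      · exact (integrable_exp_neg_mul_sq hc).const_mul _
      · exact hptwise
    have hrhs : (∫ t : ℝ, 2 ^ N * Real.exp (-c * t ^ 2))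
        = 2 ^ N * Real.sqrt (Real.pi / c) := by
      rw [MeasureTheory.integral_const_mul, integral_gaussian]
    have hratio : (Real.sqrt (Real.pi / b))⁻¹ * Real.sqrt (Real.pi / c)
        = Real.sqrt (1 / (1 - lam₀)) := by
      rw [← Real.sqrt_inv, ← Real.sqrt_mul (by positivity)]
      congr 1
      rw [hbdef, hcdef]
      field_simp
    calc (Real.sqrt (Real.pi / b))⁻¹
          * ∫ t : ℝ, ∑ σ : Fin N → Bool, Real.exp (-b * t ^ 2 + (lam₀ * S σ) * t)
        ≤ (Real.sqrt (Real.pi / b))⁻¹ * (2 ^ N * Real.sqrt (Real.pi / c)) := by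
          apply mul_le_mul_of_nonneg_left _ (le_of_lt (inv_pos.mpr hsqrtb))
          rw [← hrhs]; exact hintle
      _ = 2 ^ N * Real.sqrt (1 / (1 - lam₀)) := by
          rw [← hratio]; ring
  -- take logarithms
  have hpos : 0 < ∑ σ : Fin N → Bool, Real.exp (lam₀ * N * (mag N σ) ^ 2 / 2) :=
    Finset.sum_pos (fun σ _ => Real.exp_pos _) ⟨fun _ => true, Finset.mem_univ _⟩
  have hsq : (0 : ℝ) < Real.sqrt (1 / (1 - lam₀)) := Real.sqrt_pos.mpr (by positivity)
  have hlog : Real.log (∑ σ : Fin N → Bool, Real.exp (lam₀ * N * (mag N σ) ^ 2 / 2))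
      ≤ N * Real.log 2 + Real.log (1 / (1 - lam₀)) / 2 := by
    have := Real.log_le_log hpos hkey
    rwa [Real.log_mul (by positivity) (ne_of_gt hsq), Real.log_pow,
      Real.log_sqrt (by positivity)] at this
  have hdiv : Real.log (∑ σ : Fin N → Bool, Real.exp (lam₀ * N * (mag N σ) ^ 2 / 2)) / N
      ≤ (N * Real.log 2 + Real.log (1 / (1 - lam₀)) / 2) / N := by
    gcongr
  refine hdiv.trans ?_
  have heq : (N * Real.log 2 + Real.log (1 / (1 - lam₀)) / 2) / N
      = Real.log 2 + (1 / N) * (Real.log (1 / (1 - lam₀)) / 2) := by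
    field_simp
  rw [heq]
  have h1N : (0 : ℝ) ≤ 1 / N := by positivity
  nlinarith [h1N]
end
end
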